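/- arXiv:2211.14251 — 3 statements merged into one kernel-verified Lean document; each statement's English description precedes it below -/
import Mathlib

section
/- Let U ⊆ ℝ² be a Jordan domain and K a continuum that intersects U but is not contained in U. Let K' = K ∩ cl(U). Then K' ∪ ∂U is connected. -/
open Set Metric Complex

section Helpers

variable {X : Type*} [TopologicalSpace X]

/-- A continuous function on a preconnected set taking values in `2πℤ` is constant. -/
lemma twopi_constancy {s : Set X} (hs : IsPreconnected s) {h : X → ℝ}
    (hc : ContinuousOn h s) (hint : ∀ x ∈ s, ∃ k : ℤ, h x = k * (2 * Real.pi))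
    {x y : X} (hx : x ∈ s) (hy : y ∈ s) : h x = h y := by
  have key : ∀ a b : X, a ∈ s → b ∈ s → h a < h b → False := by
    intro a b ha hb hab
    obtain ⟨ka, hka⟩ := hint a ha
    obtain ⟨kb, hkb⟩ := hint b hb
    have hpi := Real.pi_pos
    have hklt : (ka : ℝ) < kb := by
      by_contra hcon
      push_neg at hcon
      have : (kb : ℝ) * (2 * Real.pi) ≤ ka * (2 * Real.pi) := by
        apply mul_le_mul_of_nonneg_right hcon (by positivity)
      rw [hka, hkb] at hab; linarith
    have hc1 : h a < ka * (2 * Real.pi) + Real.pi := by rw [hka]; linarith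
    have hc2 : (ka : ℝ) * (2 * Real.pi) + Real.pi < h b := by
      have : (ka : ℝ) + 1 ≤ kb := by exact_mod_cast Int.add_one_le_iff.mpr (by exact_mod_cast hklt)
      rw [hkb]; nlinarith
    have := hs.intermediate_value ha hb hc
      (mem_Icc.mpr ⟨le_of_lt hc1, le_of_lt hc2⟩)
    obtain ⟨z, hz, hzval⟩ := this
    obtain ⟨kz, hkz⟩ := hint z hz
    rw [hkz] at hzval
    have h0 : ((2 : ℝ) * ((kz : ℝ) - (ka : ℝ)) - 1) * Real.pi = 0 := by
      linear_combination hzval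
    have : (2 : ℝ) * ((kz : ℝ) - (ka : ℝ)) = 1 := by
      rcases mul_eq_zero.mp h0 with h' | h'
      · linarith
      · exact absurd h' Real.pi_ne_zero
    have : (2 * (kz - ka) : ℤ) = 1 := by exact_mod_cast this
    omega
  rcases lt_trichotomy (h x) (h y) with h1 | h1 | h1
  · exact absurd (key x y hx hy h1) (by simp)
  · exact h1
  · exact absurd (key y x hy hx h1) (by simp)

/-- Uniqueness of continuous logarithms on preconnected sets. -/
lemma clog_unique {s : Set X} (hs : IsPreconnected s) {g₁ g₂ : X → ℂ}
    (h₁ : ContinuousOn g₁ s) (h₂ : ContinuousOn g₂ s)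
    (he : ∀ x ∈ s, Complex.exp (g₁ x) = Complex.exp (g₂ x))
    {x₀ : X} (hx₀ : x₀ ∈ s) (h0 : g₁ x₀ = g₂ x₀) : Set.EqOn g₁ g₂ s := by
  have key : ∀ x ∈ s, ∃ n : ℤ, g₁ x - g₂ x = n * (2 * Real.pi * Complex.I) := by
    intro x hxs
    have : Complex.exp (g₁ x - g₂ x) = 1 := by
      rw [Complex.exp_sub, he x hxs, div_self (Complex.exp_ne_zero _)]
    exact Complex.exp_eq_one_iff.mp this
  have him : ∀ x ∈ s, ∃ k : ℤ, (g₁ x - g₂ x).im = k * (2 * Real.pi) := by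
    intro x hxs
    obtain ⟨n, hn⟩ := key x hxs
    exact ⟨n, by rw [hn]; simp⟩
  have hre : ∀ x ∈ s, (g₁ x - g₂ x).re = 0 := by
    intro x hxs
    obtain ⟨n, hn⟩ := key x hxs
    rw [hn]; simp
  intro x hxs
  have hconst := twopi_constancy hs (h := fun x => (g₁ x - g₂ x).im)
    (Complex.continuous_im.comp_continuousOn (h₁.sub h₂)) him hxs hx₀
  have him0 : (g₁ x - g₂ x).im = 0 := by
    simpa [h0] using hconst
  have : g₁ x - g₂ x = 0 := Complex.ext (hre x hxs) him0
  exact sub_eq_zero.mp this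

variable {E : Type*} [NormedAddCommGroup E] [NormedSpace ℝ E] [ProperSpace E]

/-- Continuous logarithm on a closed ball. -/
lemma exists_clog_ball {f : E → ℂ} (hf : Continuous f) (h0 : ∀ x, f x ≠ 0)
    (R : ℝ) (hR : 0 ≤ R) :
    ∃ g : E → ℂ, ContinuousOn g (closedBall 0 R) ∧
      (∀ x ∈ closedBall 0 R, Complex.exp (g x) = f x) ∧ g 0 = Complex.log (f 0) := by
  obtain ⟨xm, hxm, hminOn⟩ := (isCompact_closedBall (0 : E) R).exists_isMinOn
    ⟨0, mem_closedBall_self hR⟩ hf.norm.continuousOn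
  have hmin : ∀ y ∈ closedBall (0:E) R, ‖f xm‖ ≤ ‖f y‖ := fun y hy => hminOn hy
  set m : ℝ := ‖f xm‖ with hm
  have hmpos : 0 < m := norm_pos_iff.mpr (h0 xm)
  set F : ℝ × E → ℂ := fun p => f (p.1 • p.2) with hF
  have hFc : Continuous F := hf.comp (continuous_fst.smul continuous_snd)
  have hKc : IsCompact (Icc (0:ℝ) 1 ×ˢ closedBall (0:E) R) :=
    isCompact_Icc.prod (isCompact_closedBall _ _)
  have hUC := hKc.uniformContinuousOn_of_continuous hFc.continuousOn
  rw [Metric.uniformContinuousOn_iff] at hUC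
  obtain ⟨δ, hδpos, hδ⟩ := hUC m hmpos
  obtain ⟨N, hN⟩ := exists_nat_one_div_lt hδpos
  set n : ℕ := N + 1 with hn
  have hnpos : 0 < (n:ℝ) := by positivity
  have hnne : (n:ℝ) ≠ 0 := ne_of_gt hnpos
  set A : ℕ → E → ℂ := fun j x => f (((j:ℝ)/(n:ℝ)) • x) with hA
  have hscale : ∀ (j : ℕ), j ≤ n → ∀ x ∈ closedBall (0:E) R,
      ((j:ℝ)/(n:ℝ)) • x ∈ closedBall (0:E) R := by
    intro j hj x hx
    rw [mem_closedBall_zero_iff] at hx ⊢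
    rw [norm_smul]
    have h1 : ‖((j:ℝ)/(n:ℝ))‖ ≤ 1 := by
      rw [Real.norm_of_nonneg (by positivity), div_le_one hnpos]
      exact_mod_cast hj
    calc ‖((j:ℝ)/(n:ℝ))‖ * ‖x‖ ≤ 1 * ‖x‖ :=
          mul_le_mul_of_nonneg_right h1 (norm_nonneg x)
      _ = ‖x‖ := one_mul _
      _ ≤ R := hx
  have hAne : ∀ (j : ℕ) (x : E), A j x ≠ 0 := fun j x => h0 _
  have hAm : ∀ (j : ℕ), j ≤ n → ∀ x ∈ closedBall (0:E) R, m ≤ ‖A j x‖ := by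
    intro j hj x hx
    exact hmin _ (hscale j hj x hx)
  have hkey : ∀ (j : ℕ), j < n → ∀ x ∈ closedBall (0:E) R,
      ‖A (j+1) x / A j x - 1‖ < 1 := by
    intro j hj x hx
    have hj1 : ((j:ℝ))/(n:ℝ) ∈ Icc (0:ℝ) 1 :=
      ⟨by positivity, by rw [div_le_one hnpos]; exact_mod_cast hj.le⟩
    have hj2 : (((j:ℝ))+1)/(n:ℝ) ∈ Icc (0:ℝ) 1 := by
      refine ⟨by positivity, ?_⟩
      rw [div_le_one hnpos]
      exact_mod_cast Nat.succ_le_of_lt hj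
    have hd : dist ((((j:ℝ))+1)/(n:ℝ), x) (((j:ℝ))/(n:ℝ), x) < δ := by
      rw [Prod.dist_eq]
      simp only [dist_self]
      rw [max_eq_left dist_nonneg, Real.dist_eq]
      have heq : (((j:ℝ))+1)/(n:ℝ) - ((j:ℝ))/(n:ℝ) = 1/(n:ℝ) := by ring
      rw [heq, abs_of_pos (by positivity)]
      have : (1:ℝ)/(n:ℝ) ≤ 1/((N:ℝ)+1) := by
        apply div_le_div_of_nonneg_left one_pos.le (by positivity)
        push_cast [hn]; linarith
      linarith
    have hdist := hδ _ (Set.mem_prod.mpr ⟨hj2, hx⟩) _ (Set.mem_prod.mpr ⟨hj1, hx⟩) hd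
    have hdist' : ‖A (j+1) x - A j x‖ < m := by
      rw [hF] at hdist
      simp only [dist_eq_norm] at hdist
      have hcast : (((j:ℕ):ℝ)+1) = (((j+1:ℕ)):ℝ) := by push_cast; ring
      rw [hA]
      simp only []
      rw [← hcast]
      exact hdist
    rw [div_sub_one (hAne j x), norm_div]
    rw [div_lt_one (norm_pos_iff.mpr (hAne j x))]
    exact lt_of_lt_of_le hdist' (hAm j hj.le x hx)
  -- the logarithm
  set g : E → ℂ := fun x => Complex.log (f 0) +
      ∑ j ∈ Finset.range n, Complex.log (A (j+1) x / A j x) with hg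
  have hslit : ∀ (j : ℕ), j < n → ∀ x ∈ closedBall (0:E) R,
      A (j+1) x / A j x ∈ Complex.slitPlane := by
    intro j hj x hx
    have := Complex.mem_slitPlane_of_norm_lt_one (z := A (j+1) x / A j x - 1)
      (hkey j hj x hx)
    simpa using this
  refine ⟨g, ?_, ?_, ?_⟩
  · -- continuity
    apply ContinuousOn.add continuousOn_const
    apply continuousOn_finset_sum
    intro j hj
    rw [Finset.mem_range] at hj
    intro x hx
    apply ContinuousAt.continuousWithinAt
    have hAc : ∀ (k : ℕ), Continuous (fun y => A k y) := by
      intro k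
      exact hf.comp (continuous_const_smul _)
    exact ContinuousAt.clog
      (((hAc (j+1)).continuousAt).div ((hAc j).continuousAt) (hAne j x))
      (hslit j hj x hx)
  · -- exp g = f
    intro x hx
    rw [hg]
    simp only []
    rw [Complex.exp_add, Complex.exp_sum, Complex.exp_log (h0 0)]
    have hterm : ∀ j ∈ Finset.range n, Complex.exp (Complex.log (A (j+1) x / A j x))
        = A (j+1) x / A j x := by
      intro j hj
      exact Complex.exp_log (div_ne_zero (hAne _ x) (hAne j x))
    rw [Finset.prod_congr rfl hterm]
    have htel : ∀ k : ℕ, k ≤ n →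
        ∏ j ∈ Finset.range k, (A (j+1) x / A j x) = A k x / A 0 x := by
      intro k
      induction k with
      | zero => intro _; simp [div_self (hAne 0 x)]
      | succ k ih =>
        intro hk
        rw [Finset.prod_range_succ, ih (Nat.le_of_succ_le hk)]
        field_simp [hAne k x, hAne 0 x, hAne (k+1) x]
    rw [htel n le_rfl]
    have hA0 : A 0 x = f 0 := by
      rw [hA]; norm_num
    have hAn : A n x = f x := by
      rw [hA]
      simp only []
      rw [div_self hnne, one_smul]
    rw [hA0, hAn]
    field_simp [h0 0]
  · -- value at 0
    rw [hg]
    simp only []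
    have : ∀ j ∈ Finset.range n, Complex.log (A (j+1) 0 / A j 0) = 0 := by
      intro j hj
      have : ∀ k : ℕ, A k 0 = f 0 := by intro k; rw [hA]; simp
      rw [this, this, div_self (h0 0), Complex.log_one]
    rw [Finset.sum_congr rfl this]
    simp

/-- Global continuous logarithm for a nonvanishing continuous function. -/
lemma exists_clog {f : E → ℂ} (hf : Continuous f) (h0 : ∀ x, f x ≠ 0) :
    ∃ g : E → ℂ, Continuous g ∧ ∀ x, Complex.exp (g x) = f x := by
  have hball : ∀ n : ℕ, ∃ g : E → ℂ, ContinuousOn g (closedBall 0 (n:ℝ)) ∧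
      (∀ x ∈ closedBall 0 (n:ℝ), Complex.exp (g x) = f x) ∧ g 0 = Complex.log (f 0) :=
    fun n => exists_clog_ball hf h0 n (Nat.cast_nonneg n)
  choose G hG1 hG2 hG3 using hball
  have hpre : ∀ n : ℕ, IsPreconnected (closedBall (0:E) (n:ℝ)) :=
    fun n => (convex_closedBall (0:E) (n:ℝ)).isPreconnected
  have hcons : ∀ m n : ℕ, m ≤ n → Set.EqOn (G m) (G n) (closedBall 0 (m:ℝ)) := by
    intro m n hmn
    have hsub : closedBall (0:E) (m:ℝ) ⊆ closedBall 0 (n:ℝ) :=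
      closedBall_subset_closedBall (by exact_mod_cast hmn)
    exact clog_unique (hpre m) (hG1 m) ((hG1 n).mono hsub)
      (fun x hx => by rw [hG2 m x hx, hG2 n x (hsub hx)])
      (mem_closedBall_self (Nat.cast_nonneg m)) (by rw [hG3 m, hG3 n])
  set g : E → ℂ := fun x => G (⌊‖x‖⌋₊ + 1) x with hg
  have hagree : ∀ (n : ℕ) (x : E), ‖x‖ < (n:ℝ) → g x = G n x := by
    intro n x hx
    have hxk : x ∈ closedBall (0:E) ((⌊‖x‖⌋₊ + 1 : ℕ) : ℝ) := by
      rw [mem_closedBall_zero_iff]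
      push_cast
      exact (Nat.lt_floor_add_one ‖x‖).le
    have hkn : ⌊‖x‖⌋₊ + 1 ≤ n := by
      have : ⌊‖x‖⌋₊ < n := (Nat.floor_lt (norm_nonneg x)).mpr hx
      omega
    exact hcons _ n hkn hxk
  refine ⟨g, ?_, ?_⟩
  · rw [continuous_iff_continuousAt]
    intro x
    set n : ℕ := ⌊‖x‖⌋₊ + 1 with hn
    have hxn : ‖x‖ < (n:ℝ) := by
      rw [hn]; push_cast; exact Nat.lt_floor_add_one ‖x‖
    have hxball : x ∈ ball (0:E) (n:ℝ) := mem_ball_zero_iff.mpr hxn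
    have hcontGn : ContinuousAt (G n) x :=
      (hG1 n).continuousAt (Filter.mem_of_superset (isOpen_ball.mem_nhds hxball)
        ball_subset_closedBall)
    apply hcontGn.congr
    filter_upwards [isOpen_ball.mem_nhds hxball] with y hy
    exact (hagree n y (mem_ball_zero_iff.mp hy)).symm
  · intro x
    have hxn : ‖x‖ < ((⌊‖x‖⌋₊ + 1 : ℕ):ℝ) := by push_cast; exact Nat.lt_floor_add_one ‖x‖
    rw [hagree _ x hxn]
    exact hG2 _ x (mem_closedBall_zero_iff.mpr hxn.le)

/-- Unicoherence-type lemma: the intersection of two closed preconnected sets covering the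
whole space is preconnected. -/
lemma unicoherence {A B : Set E} (hA : IsClosed A) (hB : IsClosed B)
    (hAc : IsPreconnected A) (hBc : IsPreconnected B) (hun : A ∪ B = univ) :
    IsPreconnected (A ∩ B) := by
  classical
  by_contra hcon
  rw [IsPreconnected] at hcon
  push_neg at hcon
  obtain ⟨u, v, hu, hv, hcover, hne1, hne2, hempty⟩ := hcon
  set C := A ∩ B with hC
  have hCclosed : IsClosed C := hA.inter hB
  set P := C ∩ u with hP
  set Q := C ∩ v with hQ
  have hPQdisj : P ∩ Q = ∅ := by
    apply eq_empty_of_subset_empty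
    rw [← hempty]
    intro x ⟨⟨hx1, hx2⟩, ⟨_, hx3⟩⟩
    exact ⟨hx1, hx2, hx3⟩
  have hPeq : P = C ∩ vᶜ := by
    ext x
    constructor
    · rintro ⟨hx1, hx2⟩
      refine ⟨hx1, fun hxv => ?_⟩
      have : x ∈ P ∩ Q := ⟨⟨hx1, hx2⟩, ⟨hx1, hxv⟩⟩
      rw [hPQdisj] at this; exact this
    · rintro ⟨hx1, hx2⟩
      rcases hcover hx1 with h | h
      · exact ⟨hx1, h⟩
      · exact absurd h hx2
  have hQeq : Q = C ∩ uᶜ := by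
    ext x
    constructor
    · rintro ⟨hx1, hx2⟩
      refine ⟨hx1, fun hxu => ?_⟩
      have : x ∈ P ∩ Q := ⟨⟨hx1, hxu⟩, ⟨hx1, hx2⟩⟩
      rw [hPQdisj] at this; exact this
    · rintro ⟨hx1, hx2⟩
      rcases hcover hx1 with h | h
      · exact absurd h hx2
      · exact ⟨hx1, h⟩
  have hPclosed : IsClosed P := hPeq ▸ hCclosed.inter hv.isClosed_compl
  have hQclosed : IsClosed Q := hQeq ▸ hCclosed.inter hu.isClosed_compl
  have hPne : P.Nonempty := hne1
  have hQne : Q.Nonempty := hne2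
  have hPQunion : P ∪ Q = C := by
    apply Subset.antisymm
    · rintro x (⟨h1, _⟩ | ⟨h1, _⟩) <;> exact h1
    · intro x hx
      rcases hcover hx with h | h
      · exact Or.inl ⟨hx, h⟩
      · exact Or.inr ⟨hx, h⟩
  -- Urysohn-type function
  have hdenom : ∀ x : E, infDist x P + infDist x Q ≠ 0 := by
    intro x hzero
    have h1 : infDist x P = 0 := le_antisymm (by linarith [infDist_nonneg (x := x) (s := Q)]) infDist_nonneg
    have h2 : infDist x Q = 0 := by linarith [infDist_nonneg (x := x) (s := P)]
    have hx1 : x ∈ P := (hPclosed.mem_iff_infDist_zero hPne).mpr h1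
    have hx2 : x ∈ Q := (hQclosed.mem_iff_infDist_zero hQne).mpr h2
    have : x ∈ P ∩ Q := ⟨hx1, hx2⟩
    rw [hPQdisj] at this; exact this
  set uu : E → ℝ := fun x => infDist x P / (infDist x P + infDist x Q) with huudef
  have huu : Continuous uu :=
    (continuous_infDist_pt P).div
      ((continuous_infDist_pt P).add (continuous_infDist_pt Q)) hdenom
  have huuP : ∀ x ∈ P, uu x = 0 := by
    intro x hx
    rw [huudef]
    simp [infDist_zero_of_mem hx]
  have huuQ : ∀ x ∈ Q, uu x = 1 := by
    intro x hx
    have h2 : infDist x Q = 0 := infDist_zero_of_mem hx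
    have h1 : infDist x P ≠ 0 := by
      intro h
      have hx1 : x ∈ P := (hPclosed.mem_iff_infDist_zero hPne).mpr h
      have : x ∈ P ∩ Q := ⟨hx1, hx⟩
      rw [hPQdisj] at this; exact this
    rw [huudef]
    simp only [h2, add_zero]
    exact div_self h1
  -- the circle-valued function
  set f : E → ℂ := fun x => if x ∈ A then Complex.exp (Real.pi * uu x * Complex.I)
      else Complex.exp (-(Real.pi * uu x) * Complex.I) with hfdef
  have hCsub : frontier A ⊆ C := by
    intro a ha
    have ha1 : a ∈ A := hA.frontier_subset ha
    have ha2 : a ∈ B := by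
      have : a ∈ closure Aᶜ := by
        rw [frontier_eq_closure_inter_closure] at ha
        exact ha.2
      have hsub : Aᶜ ⊆ B := by
        intro y hy
        rcases (hun ▸ mem_univ y : y ∈ A ∪ B) with h | h
        · exact absurd h hy
        · exact h
      exact hB.closure_eq ▸ (closure_mono hsub this)
    exact ⟨ha1, ha2⟩
  have hbranch : ∀ a ∈ frontier A,
      Complex.exp (Real.pi * uu a * Complex.I) = Complex.exp (-(Real.pi * uu a) * Complex.I) := by
    intro a ha
    rcases (hPQunion ▸ hCsub ha : a ∈ P ∪ Q) with h | h
    · rw [huuP a h]; norm_num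
    · rw [huuQ a h]
      rw [Complex.exp_eq_exp_iff_exists_int]
      exact ⟨1, by push_cast; ring⟩
  have hfc : Continuous f := by
    apply Continuous.if
    · intro a ha
      have : frontier {x | x ∈ A} = frontier A := rfl
      rw [this] at ha
      exact hbranch a ha
    · exact Complex.continuous_exp.comp
        ((continuous_const.mul (Complex.continuous_ofReal.comp huu)).mul continuous_const)
    · exact Complex.continuous_exp.comp
        (((continuous_const.mul (Complex.continuous_ofReal.comp huu)).neg).mul continuous_const)
  have hf0 : ∀ x, f x ≠ 0 := by
    intro x
    rw [hfdef]
    simp only []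
    split_ifs <;> exact Complex.exp_ne_zero _
  obtain ⟨g, hgc, hge⟩ := exists_clog hfc hf0
  -- constancy on A
  have hintA : ∀ x ∈ A, ∃ k : ℤ, (g x).im - Real.pi * uu x = k * (2 * Real.pi) := by
    intro x hx
    have hfx : f x = Complex.exp (Real.pi * uu x * Complex.I) := if_pos hx
    have : Complex.exp (g x) = Complex.exp (Real.pi * uu x * Complex.I) := by
      rw [hge x, hfx]
    obtain ⟨k, hk⟩ := Complex.exp_eq_exp_iff_exists_int.mp this
    refine ⟨k, ?_⟩
    have him := congrArg Complex.im hk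
    simp [Complex.add_im, Complex.mul_im, Complex.mul_re] at him
    rw [him]; ring
  have hswitch : ∀ x ∈ B,
      Complex.exp (g x) = Complex.exp (-(Real.pi * uu x) * Complex.I) := by
    intro x hxB
    by_cases hxA : x ∈ A
    · have hxC : x ∈ C := ⟨hxA, hxB⟩
      have hfx : f x = Complex.exp (Real.pi * uu x * Complex.I) := if_pos hxA
      rw [hge x, hfx]
      rcases (hPQunion ▸ hxC : x ∈ P ∪ Q) with h | h
      · rw [huuP x h]; norm_num
      · rw [huuQ x h]
        rw [Complex.exp_eq_exp_iff_exists_int]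
        exact ⟨1, by push_cast; ring⟩
    · rw [hge x]
      show (if x ∈ A then Complex.exp (Real.pi * uu x * Complex.I)
        else Complex.exp (-(Real.pi * uu x) * Complex.I)) = _
      rw [if_neg hxA]
  have hintB : ∀ x ∈ B, ∃ k : ℤ, (g x).im + Real.pi * uu x = k * (2 * Real.pi) := by
    intro x hxB
    obtain ⟨k, hk⟩ := Complex.exp_eq_exp_iff_exists_int.mp (hswitch x hxB)
    refine ⟨k, ?_⟩
    have him := congrArg Complex.im hk
    simp [Complex.add_im, Complex.mul_im, Complex.mul_re] at him
    rw [him]; ring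
  obtain ⟨p, hp⟩ := hPne
  obtain ⟨q, hq⟩ := hQne
  have hpA : p ∈ A := hp.1.1
  have hqA : q ∈ A := hq.1.1
  have hpB : p ∈ B := hp.1.2
  have hqB : q ∈ B := hq.1.2
  have hcontA : ContinuousOn (fun x => (g x).im - Real.pi * uu x) A :=
    ((Complex.continuous_im.comp hgc).sub (continuous_const.mul huu)).continuousOn
  have hcontB : ContinuousOn (fun x => (g x).im + Real.pi * uu x) B :=
    ((Complex.continuous_im.comp hgc).add (continuous_const.mul huu)).continuousOn
  have e1 := twopi_constancy hAc hcontA hintA hpA hqA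
  have e2 := twopi_constancy hBc hcontB hintB hpB hqB
  simp only [huuP p hp, huuQ q hq] at e1 e2
  have := Real.pi_pos
  linarith

/-- Boundary bumping: in a compact preconnected set `K`, the connected component of a point
in `K ∩ C` (with `C` closed) meets the closure of `K \ C`, provided `K \ C` is nonempty. -/
lemma bump {α : Type*} [TopologicalSpace α] [T2Space α] {K C : Set α}
    (hK : IsCompact K) (hKconn : IsPreconnected K) (hC : IsClosed C)
    (hne : (K \ C).Nonempty) {x : α} (hx : x ∈ K ∩ C) :
    (connectedComponentIn (K ∩ C) x ∩ closure (K \ C)).Nonempty := by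
  set A := K ∩ C with hA
  have hAcomp : IsCompact A := hK.inter_right hC
  haveI : CompactSpace ↥A := isCompact_iff_compactSpace.mp hAcomp
  set L : Set α := closure (K \ C) with hL
  set x' : ↥A := ⟨x, hx⟩ with hx'
  by_contra hcon
  rw [not_nonempty_iff_eq_empty] at hcon
  set L' : Set ↥A := Subtype.val ⁻¹' L with hL'
  have hL'closed : IsClosed L' := isClosed_closure.preimage continuous_subtype_val
  have hccL' : connectedComponent x' ∩ L' = ∅ := by
    rw [eq_empty_iff_forall_notMem]
    rintro z ⟨hz1, hz2⟩
    have hmem : (z : α) ∈ connectedComponentIn A x ∩ L := by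
      refine ⟨?_, hz2⟩
      rw [connectedComponentIn_eq_image hx]
      exact mem_image_of_mem _ hz1
    rw [hcon] at hmem
    exact hmem
  have hclopen : ∃ Z : Set ↥A, IsClopen Z ∧ x' ∈ Z ∧ Z ∩ L' = ∅ := by
    by_contra hno
    push_neg at hno
    have hne' : ∀ Z : {Z : Set ↥A // IsClopen Z ∧ x' ∈ Z}, ((Z : Set ↥A) ∩ L').Nonempty := by
      rintro ⟨Z, hZ, hxZ⟩
      exact hno Z hZ hxZ
    haveI : Nonempty {Z : Set ↥A // IsClopen Z ∧ x' ∈ Z} :=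
      ⟨⟨univ, isClopen_univ, mem_univ _⟩⟩
    have hdir : Directed (· ⊇ ·)
        (fun Z : {Z : Set ↥A // IsClopen Z ∧ x' ∈ Z} => (Z : Set ↥A) ∩ L') := by
      rintro ⟨Z₁, hZ₁, hx₁⟩ ⟨Z₂, hZ₂, hx₂⟩
      refine ⟨⟨Z₁ ∩ Z₂, hZ₁.inter hZ₂, ⟨hx₁, hx₂⟩⟩, ?_, ?_⟩
      · rintro a ⟨⟨ha1, _⟩, ha3⟩; exact ⟨ha1, ha3⟩
      · rintro a ⟨⟨_, ha2⟩, ha3⟩; exact ⟨ha2, ha3⟩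
    have hnei := IsCompact.nonempty_iInter_of_directed_nonempty_isCompact_isClosed _ hdir hne'
      (fun Z => (Z.2.1.isClosed.inter hL'closed).isCompact)
      (fun Z => Z.2.1.isClosed.inter hL'closed)
    obtain ⟨z, hz⟩ := hnei
    have hz1 : z ∈ connectedComponent x' := by
      rw [connectedComponent_eq_iInter_isClopen x']
      exact mem_iInter.mpr fun Z => (mem_iInter.mp hz Z).1
    have hz2 : z ∈ L' :=
      (mem_iInter.mp hz ⟨univ, isClopen_univ, mem_univ _⟩).2
    have : z ∈ connectedComponent x' ∩ L' := ⟨hz1, hz2⟩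
    rw [hccL'] at this
    exact this
  obtain ⟨Z, hZclopen, hxZ, hZL⟩ := hclopen
  set V : Set α := Subtype.val '' Z with hV
  have hVsub : V ⊆ A := by rintro _ ⟨z, _, rfl⟩; exact z.2
  have hVcompact : IsCompact V :=
    (hZclopen.isClosed.isCompact).image continuous_subtype_val
  have hVclosed : IsClosed V := hVcompact.isClosed
  have hxV : x ∈ V := ⟨x', hxZ, rfl⟩
  have hVL : ∀ a ∈ V, a ∉ L := by
    rintro _ ⟨z, hzZ, rfl⟩ hzL
    have : z ∈ Z ∩ L' := ⟨hzZ, hzL⟩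
    rw [hZL] at this
    exact this
  obtain ⟨O₁, hO₁, hO₁eq⟩ := isOpen_induced_iff.mp hZclopen.isOpen
  have himg : V = O₁ ∩ A := by
    rw [hV, ← hO₁eq, Subtype.image_preimage_coe]
    exact inter_comm _ _
  have hopen : ∀ a : α, a ∈ V → ∃ O : Set α, IsOpen O ∧ a ∈ O ∧ O ∩ K ⊆ V := by
    intro a haV
    refine ⟨O₁ ∩ Lᶜ, hO₁.inter isClosed_closure.isOpen_compl,
      ⟨(himg ▸ haV).1, hVL a haV⟩, ?_⟩
    rintro w ⟨⟨hwO₁, hwL⟩, hwK⟩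
    have hwC : w ∈ C := by
      by_contra hwC
      exact hwL (subset_closure ⟨hwK, hwC⟩)
    rw [himg]
    exact ⟨hwO₁, ⟨hwK, hwC⟩⟩
  choose O hOopen hOmem hOsub using hopen
  set W : Set α := ⋃ (a : α) (h : a ∈ V), O a h with hW
  have hWopen : IsOpen W := isOpen_iUnion fun a => isOpen_iUnion fun h => hOopen a h
  have hWK : W ∩ K ⊆ V := by
    rintro w ⟨hwW, hwK⟩
    obtain ⟨a, ha, hwa⟩ : ∃ a, ∃ h : a ∈ V, w ∈ O a h := by
      simpa [hW] using hwW
    exact hOsub a ha ⟨hwa, hwK⟩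
  have hVW : V ⊆ W := by
    intro a ha
    exact mem_iUnion.mpr ⟨a, mem_iUnion.mpr ⟨ha, hOmem a ha⟩⟩
  obtain ⟨w₀, hw₀K, hw₀C⟩ := hne
  have hcontr := hKconn W Vᶜ hWopen hVclosed.isOpen_compl
    (fun a ha => by
      by_cases h : a ∈ V
      · exact Or.inl (hVW h)
      · exact Or.inr h)
    ⟨x, hx.1, hVW hxV⟩
    ⟨w₀, hw₀K, fun h => hw₀C (hVsub h).2⟩
  obtain ⟨z, hzK, hzW, hzV⟩ := hcontr
  exact hzV (hWK ⟨hzW, hzK⟩)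

end Helpers

/-- A Jordan curve in the plane: a set homeomorphic to the unit circle. -/
def IsJordanCurve (Γ : Set (EuclideanSpace ℝ (Fin 2))) : Prop :=
  Nonempty (Γ ≃ₜ Metric.sphere (0 : EuclideanSpace ℝ (Fin 2)) 1)

/-- A Jordan domain: the bounded connected component of the complement of a
Jordan curve. -/
def IsJordanDomain (U : Set (EuclideanSpace ℝ (Fin 2))) : Prop :=
  ∃ (Γ : Set (EuclideanSpace ℝ (Fin 2))) (z : EuclideanSpace ℝ (Fin 2)),
    IsJordanCurve Γ ∧ z ∈ Γᶜ ∧ U = connectedComponentIn Γᶜ z ∧ Bornology.IsBounded U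

theorem stmt10 (U K : Set (EuclideanSpace ℝ (Fin 2))) (hU : IsJordanDomain U)
    (hKc : IsCompact K) (hKconn : IsConnected K)
    (hint : (K ∩ U).Nonempty) (hnotsub : ¬ K ⊆ U) :
    IsConnected ((K ∩ closure U) ∪ frontier U) := by
  classical
  obtain ⟨Γ, z, ⟨e⟩, hz, hUeq, hUbd⟩ := hU
  subst hUeq
  set U := connectedComponentIn Γᶜ z with hUdef
  -- Γ is a nonempty compact connected set
  have hsphne : (Metric.sphere (0 : EuclideanSpace ℝ (Fin 2)) 1).Nonempty :=
    NormedSpace.sphere_nonempty.mpr zero_le_one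
  have hsphconn : IsConnected (Metric.sphere (0 : EuclideanSpace ℝ (Fin 2)) 1) := by
    apply isConnected_sphere ?_ 0 zero_le_one
    have h2 : Module.finrank ℝ (EuclideanSpace ℝ (Fin 2)) = 2 := finrank_euclideanSpace_fin
    have hr : Module.rank ℝ (EuclideanSpace ℝ (Fin 2)) = 2 := by
      rw [← Module.finrank_eq_rank, h2]; norm_num
    rw [hr]; norm_num
  haveI : ConnectedSpace ↥(Metric.sphere (0 : EuclideanSpace ℝ (Fin 2)) 1) :=
    Subtype.connectedSpace hsphconn
  have hΓrange : Γ = range (fun s : ↥(Metric.sphere (0 : EuclideanSpace ℝ (Fin 2)) 1) =>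
      ((e.symm s : ↥Γ) : EuclideanSpace ℝ (Fin 2))) := by
    ext a
    constructor
    · intro ha
      exact ⟨e ⟨a, ha⟩, by simp⟩
    · rintro ⟨s, rfl⟩
      exact (e.symm s).2
  have hΓcomp : IsCompact Γ := by
    rw [hΓrange]
    haveI : CompactSpace ↥(Metric.sphere (0 : EuclideanSpace ℝ (Fin 2)) 1) :=
      isCompact_iff_compactSpace.mp (isCompact_sphere _ _)
    exact isCompact_range (continuous_subtype_val.comp e.symm.continuous)
  have hΓconn : IsPreconnected Γ := by
    rw [hΓrange]
    exact (isConnected_range (continuous_subtype_val.comp e.symm.continuous)).isPreconnected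
  obtain ⟨x₀, hx₀⟩ : Γ.Nonempty := by
    obtain ⟨s, hs⟩ := hsphne
    exact ⟨_, (e.symm ⟨s, hs⟩).2⟩
  have hΓclosed : IsClosed Γ := hΓcomp.isClosed
  have hΓopenc : IsOpen Γᶜ := hΓclosed.isOpen_compl
  -- basic facts about U
  have hUopen : IsOpen U := hΓopenc.connectedComponentIn
  have hUne : U.Nonempty := ⟨z, mem_connectedComponentIn hz⟩
  have hUconn : IsPreconnected U := isPreconnected_connectedComponentIn
  have hUsub : U ⊆ Γᶜ := connectedComponentIn_subset _ _
  have hΓUc : Γ ⊆ Uᶜ := fun a ha haU => hUsub haU ha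
  -- absorption: closure points of a component of Γᶜ inside Γᶜ belong to the component
  have key : ∀ x : EuclideanSpace ℝ (Fin 2), x ∈ Γᶜ →
      ∀ p ∈ closure (connectedComponentIn Γᶜ x), p ∈ Γᶜ →
      p ∈ connectedComponentIn Γᶜ x := by
    intro x hx p hpcl hpc
    obtain ⟨y, hyWp, hyW⟩ := mem_closure_iff.mp hpcl _
      (hΓopenc.connectedComponentIn) (mem_connectedComponentIn hpc)
    have h1 := connectedComponentIn_eq hyWp
    have h2 := connectedComponentIn_eq hyW
    rw [h2, ← h1]
    exact mem_connectedComponentIn hpc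
  -- frontier U is contained in Γ
  have hUfr : frontier U = closure U \ U := hUopen.frontier_eq
  have hfrΓ : frontier U ⊆ Γ := by
    intro p hp
    rw [hUfr] at hp
    by_contra hpΓ
    exact hp.2 (key z hz p hp.1 hpΓ)
  -- frontier U is nonempty
  have hfrne : (frontier U).Nonempty := by
    by_contra hcon
    rw [not_nonempty_iff_eq_empty] at hcon
    have hclopen : IsClopen U := isClopen_iff_frontier_eq_empty.mpr hcon
    rcases isClopen_iff.mp hclopen with h | h
    · exact hUne.ne_empty h
    · exact hUsub (h ▸ mem_univ x₀) hx₀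
  -- Uᶜ is preconnected
  have hUcconn : IsPreconnected Uᶜ := by
    apply isPreconnected_of_forall x₀
    intro y hy
    by_cases hyΓ : y ∈ Γ
    · exact ⟨Γ, hΓUc, hx₀, hyΓ, hΓconn⟩
    · have hyc : y ∈ Γᶜ := hyΓ
      set W := connectedComponentIn Γᶜ y with hW
      have hWy : y ∈ W := mem_connectedComponentIn hyc
      have hWU : W ∩ U = ∅ := by
        rw [eq_empty_iff_forall_notMem]
        rintro a ⟨haW, haU⟩
        have h1 := connectedComponentIn_eq haW
        have h2 := connectedComponentIn_eq haU
        have : W = U := by rw [hW, hUdef, h1, h2]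
        exact hy (this ▸ hWy)
      have hclWU : closure W ⊆ Uᶜ := by
        intro p hp hpU
        obtain ⟨q, hq1, hq2⟩ := mem_closure_iff.mp hp U hUopen hpU
        have : q ∈ W ∩ U := ⟨hq2, hq1⟩
        rw [hWU] at this
        exact this
      have hclWΓ : (closure W ∩ Γ).Nonempty := by
        by_contra hcon
        rw [not_nonempty_iff_eq_empty] at hcon
        have hsub : closure W ⊆ W := by
          intro p hp
          have hpc : p ∈ Γᶜ := by
            intro hpΓ
            have : p ∈ closure W ∩ Γ := ⟨hp, hpΓ⟩
            rw [hcon] at this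
            exact this
          exact key y hyc p hp hpc
        have hWclosed : IsClosed W := isClosed_of_closure_subset hsub
        have hWopen : IsOpen W := hΓopenc.connectedComponentIn
        rcases isClopen_iff.mp ⟨hWclosed, hWopen⟩ with h | h
        · exact (h ▸ hWy : y ∈ (∅ : Set (EuclideanSpace ℝ (Fin 2))))
        · have hx₀W : x₀ ∈ W := by rw [h]; trivial
          exact (connectedComponentIn_subset Γᶜ y) hx₀W hx₀
      obtain ⟨p₀, hp₀W, hp₀Γ⟩ := hclWΓ
      refine ⟨Γ ∪ closure W, ?_, Or.inl hx₀, Or.inr (subset_closure hWy), ?_⟩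
      · rintro a (ha | ha)
        · exact hΓUc ha
        · exact hclWU ha
      · exact IsPreconnected.union p₀ hp₀Γ hp₀W hΓconn
          (isPreconnected_connectedComponentIn.closure)
  -- frontier U is preconnected, via unicoherence
  have hfrconn : IsPreconnected (frontier U) := by
    have hcover : closure U ∪ Uᶜ = univ := by
      ext a
      simp only [mem_union, mem_univ, iff_true]
      by_cases h : a ∈ U
      · exact Or.inl (subset_closure h)
      · exact Or.inr h
    have h := unicoherence isClosed_closure hUopen.isClosed_compl
      hUconn.closure hUcconn hcover
    have heq : closure U ∩ Uᶜ = frontier U := by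
      rw [hUfr]; rfl
    rwa [heq] at h
  -- assembling everything
  obtain ⟨p₀, hp₀⟩ := hfrne
  constructor
  · exact ⟨p₀, Or.inr hp₀⟩
  apply isPreconnected_of_forall p₀
  rintro y (hy | hy)
  swap
  · exact ⟨frontier U, subset_union_right, hp₀, hy, hfrconn⟩
  by_cases hKsub : K ⊆ closure U
  · obtain ⟨w, hwK, hwU⟩ := not_subset.mp hnotsub
    have hwfr : w ∈ frontier U := by rw [hUfr]; exact ⟨hKsub hwK, hwU⟩
    refine ⟨K ∪ frontier U, ?_, Or.inr hp₀, Or.inl hy.1, ?_⟩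
    · rintro a (ha | ha)
      · exact Or.inl ⟨ha, hKsub ha⟩
      · exact Or.inr ha
    · exact IsPreconnected.union w hwK hwfr hKconn.isPreconnected hfrconn
  · have hne' : (K \ closure U).Nonempty := by
      obtain ⟨w, hw1, hw2⟩ := not_subset.mp hKsub
      exact ⟨w, hw1, hw2⟩
    obtain ⟨w, hw1, hw2⟩ := bump hKc hKconn.isPreconnected isClosed_closure hne' hy
    have hwfr : w ∈ frontier U := by
      have hwcl : w ∈ closure U := (connectedComponentIn_subset _ _ hw1).2
      have hwnU : w ∉ U := by
        intro hwU
        obtain ⟨q, hq1, hq2⟩ := mem_closure_iff.mp hw2 U hUopen hwU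
        exact hq2.2 (subset_closure hq1)
      rw [hUfr]; exact ⟨hwcl, hwnU⟩
    refine ⟨connectedComponentIn (K ∩ closure U) y ∪ frontier U, ?_, Or.inr hp₀,
      Or.inl (mem_connectedComponentIn hy), ?_⟩
    · rintro a (ha | ha)
      · exact Or.inl (connectedComponentIn_subset _ _ ha)
      · exact Or.inr ha
    · exact IsPreconnected.union w hw1 hwfr
        isPreconnected_connectedComponentIn hfrconn
end

section
/- Let U ⊆ ℝ² be a Jordan domain and K a continuum such that points x, y ∈ U lie in different connected components of U \ K. Then there exists a connected component C of K ∩ cl(U) such that x and y lie in different connected components of U \ C. -/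
open Set Metric Complex Topology

noncomputable section

lemma mem_slit_of_near_one {w : ℂ} (h : ‖w - 1‖ < 1) : w ∈ Complex.slitPlane := by
  rw [Complex.mem_slitPlane_iff]
  left
  have h1 : |(w - 1).re| ≤ ‖w - 1‖ := Complex.abs_re_le_norm _
  have h2 : |w.re - 1| < 1 := by
    have : (w - 1).re = w.re - 1 := by simp
    rw [this] at h1; exact lt_of_le_of_lt h1 h
  have := (abs_lt.mp h2).1
  linarith

lemma telescope_prod (f : ℕ → ℂ) (n : ℕ) (h : ∀ i ≤ n, f i ≠ 0) :
    ∏ i ∈ Finset.range n, (f (i + 1) / f i) = f n / f 0 := by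
  induction n with
  | zero => rw [Finset.range_zero, Finset.prod_empty, div_self (h 0 le_rfl)]
  | succ n ih =>
    rw [Finset.prod_range_succ, ih (fun i hi => h i (hi.trans (Nat.le_succ n)))]
    have h0 := h 0 (Nat.zero_le _)
    have hn := h n (Nat.le_succ n)
    field_simp

lemma joinedIn_of_mem_ccIn {X : Type*} [TopologicalSpace X] [LocallyPathConnectedSpace X]
    {O : Set X} (hO : IsOpen O) {x y : X}
    (h : y ∈ connectedComponentIn O x) : JoinedIn O x y := by
  have hx : x ∈ O := by
    by_contra hx
    rw [connectedComponentIn_eq_empty hx] at h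
    exact h
  have hV : IsConnected (connectedComponentIn O x) :=
    isConnected_connectedComponentIn_iff.mpr hx
  have hVo : IsOpen (connectedComponentIn O x) := hO.connectedComponentIn
  have hpc : IsPathConnected (connectedComponentIn O x) :=
    (hVo.isConnected_iff_isPathConnected).mp hV
  exact (hpc.joinedIn x (mem_connectedComponentIn hx) y h).mono
    (connectedComponentIn_subset O x)

def HasLogOn (W : Set ℂ) (x y : ℂ) : Prop :=
  ∃ g : ℂ → ℂ, ContinuousOn g W ∧ ∀ z ∈ W, Complex.exp (g z) = (z - x) / (z - y)

lemma hasLogOn_of_joinedIn {W : Set ℂ} (hW : IsCompact W) {x y : ℂ}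
    (h : JoinedIn Wᶜ x y) : HasLogOn W x y := by
  rcases W.eq_empty_or_nonempty with rfl | hWne
  · exact ⟨0, continuousOn_empty _, fun z hz => absurd hz (notMem_empty z)⟩
  obtain ⟨γ, hγ⟩ := h
  have hA : IsCompact (γ.extend '' Icc 0 1) :=
    isCompact_Icc.image_of_continuousOn γ.continuous_extend.continuousOn
  have hAW : ∀ p ∈ γ.extend '' Icc 0 1, p ∉ W := by
    rintro p ⟨t, ht, rfl⟩
    rw [γ.extend_apply ht]
    exact hγ _
  have hAne : (γ.extend '' Icc 0 1).Nonempty := ⟨x, 0, by simp, γ.extend_zero⟩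
  obtain ⟨p₀, hp₀, hmin⟩ := hA.exists_isMinOn hAne
    (continuous_infDist_pt W).continuousOn
  set δ := infDist p₀ W with hδdef
  have hδ : 0 < δ := (hW.isClosed.notMem_iff_infDist_pos hWne).mp (hAW p₀ hp₀)
  have hdist : ∀ p ∈ γ.extend '' Icc 0 1, ∀ z ∈ W, δ ≤ dist p z := by
    intro p hp z hz
    exact le_trans (hmin hp) (infDist_le_dist_of_mem hz)
  have huc := isCompact_Icc.uniformContinuousOn_of_continuous
    (γ.continuous_extend.continuousOn (s := Icc (0:ℝ) 1))
  rw [Metric.uniformContinuousOn_iff] at huc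
  obtain ⟨δ', hδ', hucd⟩ := huc δ hδ
  obtain ⟨n, hn⟩ := exists_nat_one_div_lt hδ'
  set N : ℕ := n + 1 with hNdef
  have hN : 0 < N := Nat.succ_pos n
  have hNR : (0:ℝ) < N := by exact_mod_cast hN
  set q : ℕ → ℂ := fun i => γ.extend (i / N) with hq
  have hqmem : ∀ i, i ≤ N → q i ∈ γ.extend '' Icc 0 1 := by
    intro i hi
    exact ⟨i / N, ⟨by positivity, by
      rw [div_le_one hNR]; exact_mod_cast hi⟩, rfl⟩
  have hqW : ∀ i, i ≤ N → ∀ z ∈ W, δ ≤ dist (q i) z :=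
    fun i hi => hdist _ (hqmem i hi)
  have hstep : ∀ i, i + 1 ≤ N → dist (q (i + 1)) (q i) < δ := by
    intro i hi
    apply hucd _ ⟨by positivity, by rw [div_le_one hNR]; exact_mod_cast hi⟩
      _ ⟨by positivity, by
        rw [div_le_one hNR]; exact_mod_cast (le_trans (Nat.le_succ i) hi)⟩
    push_cast
    have heq : ((i:ℝ) + 1) / ((n:ℝ) + 1) - (i:ℝ) / ((n:ℝ) + 1) = 1 / ((n:ℝ) + 1) := by
      field_simp
      ring
    rw [Real.dist_eq, hNdef, Nat.cast_add, Nat.cast_one, heq, abs_of_pos (by positivity)]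
    exact hn
  -- nonvanishing
  have hne : ∀ i, i ≤ N → ∀ z ∈ W, z - q i ≠ 0 := by
    intro i hi z hz h0
    have h1 := hqW i hi z hz
    rw [sub_eq_zero] at h0
    rw [← h0, dist_self] at h1
    linarith
  -- ratio near 1
  have hratio : ∀ i, i + 1 ≤ N → ∀ z ∈ W,
      ‖(z - q (i + 1)) / (z - q i) - 1‖ < 1 := by
    intro i hi z hz
    have hden := hne i (le_trans (Nat.le_succ i) hi) z hz
    have heq : (z - q (i + 1)) / (z - q i) - 1 = (q i - q (i + 1)) / (z - q i) := by
      field_simp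
      ring
    rw [heq, norm_div]
    rw [div_lt_one (by
      have := hqW i (le_trans (Nat.le_succ i) hi) z hz
      rw [dist_comm, Complex.dist_eq] at this
      linarith)]
    calc ‖q i - q (i + 1)‖ = dist (q (i+1)) (q i) := by
          rw [dist_comm, Complex.dist_eq]
      _ < δ := hstep i hi
      _ ≤ ‖z - q i‖ := by
          have := hqW i (le_trans (Nat.le_succ i) hi) z hz
          rw [dist_comm, Complex.dist_eq] at this
          exact this
  refine ⟨fun z => -∑ i ∈ Finset.range N, Complex.log ((z - q (i + 1)) / (z - q i)), ?_, ?_⟩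
  · apply ContinuousOn.neg
    apply continuousOn_finset_sum
    intro i hi z hz
    rw [Finset.mem_range] at hi
    have hden := hne i (le_of_lt hi) z hz
    have hcw : ContinuousWithinAt (fun z => (z - q (i + 1)) / (z - q i)) W z :=
      ((continuousWithinAt_id.sub continuousWithinAt_const).div
        (continuousWithinAt_id.sub continuousWithinAt_const) hden)
    exact hcw.clog (mem_slit_of_near_one (hratio i hi z hz))
  · intro z hz
    rw [Complex.exp_neg, Complex.exp_sum]
    have hprod : ∀ i ∈ Finset.range N,
        Complex.exp (Complex.log ((z - q (i + 1)) / (z - q i)))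
          = (fun j => z - q j) (i + 1) / (fun j => z - q j) i := by
      intro i hi
      rw [Finset.mem_range] at hi
      exact Complex.exp_log (div_ne_zero (hne (i+1) hi z hz) (hne i (le_of_lt hi) z hz))
    rw [Finset.prod_congr rfl hprod, telescope_prod _ N (fun i hi => hne i hi z hz)]
    have hqN : q N = y := by
      show γ.extend ((N:ℝ) / N) = y
      rw [div_self hNR.ne', γ.extend_one]
    have hq0 : q 0 = x := by
      show γ.extend ((0:ℕ) / N) = x
      norm_num
    rw [hqN, hq0, inv_div]

lemma exists_log_closedBall {R : ℝ} (hR : 0 ≤ R) {F : ℂ → ℂ}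
    (hF : ContinuousOn F (closedBall 0 R))
    (h0 : ∀ z ∈ closedBall (0:ℂ) R, F z ≠ 0) :
    ∃ G : ℂ → ℂ, ContinuousOn G (closedBall 0 R) ∧
      ∀ z ∈ closedBall (0:ℂ) R, Complex.exp (G z) = F z := by
  set cb := closedBall (0:ℂ) R with hcb
  have hcbc : IsCompact cb := isCompact_closedBall 0 R
  have hcbne : cb.Nonempty := ⟨0, by simp [hcb, hR]⟩
  -- minimum modulus
  obtain ⟨z₀, hz₀, hmin⟩ := hcbc.exists_isMinOn hcbne (hF.norm)
  set m := ‖F z₀‖ with hm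
  have hmpos : 0 < m := by
    rw [hm, norm_pos_iff]
    exact h0 z₀ hz₀
  have hmle : ∀ z ∈ cb, m ≤ ‖F z‖ := fun z hz => hmin hz
  -- uniform continuity
  have huc := hcbc.uniformContinuousOn_of_continuous hF
  rw [Metric.uniformContinuousOn_iff] at huc
  obtain ⟨δ, hδ, hucd⟩ := huc m hmpos
  obtain ⟨n0, hn0⟩ := exists_nat_gt (R / δ)
  set N : ℕ := n0 + 1 with hNdef
  have hN : 0 < N := Nat.succ_pos n0
  have hNR : (0:ℝ) < N := by exact_mod_cast hN
  clear_value N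
  have hRN : R / N < δ := by
    have h1 : R / δ < N := by
      rw [hNdef]; push_cast; linarith [hn0]
    have h2 : R < (N:ℝ) * δ := (div_lt_iff₀ hδ).mp h1
    rw [div_lt_iff₀ hNR]
    linarith [mul_comm (N:ℝ) δ]
  -- scaled points
  have hscale : ∀ (i : ℕ), i ≤ N → ∀ z ∈ cb, ((i : ℂ) / N) * z ∈ cb := by
    intro i hi z hz
    rw [hcb, mem_closedBall, dist_zero_right] at hz ⊢
    rw [norm_mul]
    calc ‖((i:ℂ)/N)‖ * ‖z‖ ≤ 1 * ‖z‖ := by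
          apply mul_le_mul_of_nonneg_right _ (norm_nonneg z)
          rw [norm_div]
          simp only [Complex.norm_natCast]
          rw [div_le_one hNR]
          exact_mod_cast hi
      _ ≤ R := by rw [one_mul]; exact hz
  have hdistscale : ∀ (i : ℕ), i + 1 ≤ N → ∀ z ∈ cb,
      dist (((i:ℂ)+1)/N * z) ((i:ℂ)/N * z) < δ := by
    intro i hi z hz
    rw [Complex.dist_eq]
    have heq : ((i:ℂ)+1)/N * z - (i:ℂ)/N * z = z / N := by field_simp; ring
    rw [heq, norm_div]
    simp only [Complex.norm_natCast]
    rw [hcb, mem_closedBall, dist_zero_right] at hz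
    have hz' : ‖z‖ ≤ R := by exact hz
    calc ‖z‖ / N ≤ R / N := by gcongr
      _ < δ := hRN
  -- ratios near 1
  have hratio : ∀ (i : ℕ), i + 1 ≤ N → ∀ z ∈ cb,
      ‖F (((i:ℂ)+1)/N * z) / F ((i:ℂ)/N * z) - 1‖ < 1 := by
    intro i hi z hz
    have hmem1 : ((i:ℂ)+1)/N * z ∈ cb := by
      have := hscale (i+1) hi z hz
      push_cast at this
      exact this
    have hmem0 : ((i:ℂ)/N) * z ∈ cb := hscale i (le_of_lt hi) z hz
    have hden := h0 _ hmem0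
    have heq : ∀ (a b : ℂ), b ≠ 0 → a / b - 1 = (a - b) / b := by
      intro a b hb; field_simp
    rw [heq _ _ hden, norm_div, div_lt_one (by
      have := hmle _ hmem0
      calc (0:ℝ) < m := hmpos
        _ ≤ ‖F ((i:ℂ)/N * z)‖ := this)]
    calc ‖F (((i:ℂ)+1)/N * z) - F ((i:ℂ)/N * z)‖
        = dist (F (((i:ℂ)+1)/N * z)) (F ((i:ℂ)/N * z)) := (Complex.dist_eq _ _).symm
      _ < m := hucd _ hmem1 _ hmem0 (hdistscale i hi z hz)
      _ ≤ ‖F ((i:ℂ)/N * z)‖ := hmle _ hmem0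
  refine ⟨fun z => Complex.log (F 0) +
      ∑ i ∈ Finset.range N, Complex.log (F (((i:ℂ)+1)/N * z) / F ((i:ℂ)/N * z)), ?_, ?_⟩
  · apply ContinuousOn.add continuousOn_const
    apply continuousOn_finset_sum
    intro i hi z hz
    rw [Finset.mem_range] at hi
    have hmem1 : ((i:ℂ)+1)/N * z ∈ cb := by
      have := hscale (i+1) hi z hz
      push_cast at this
      exact this
    have hmem0 : ((i:ℂ)/N) * z ∈ cb := hscale i (le_of_lt hi) z hz
    have hc1 : ContinuousWithinAt (fun w => F (((i:ℂ)+1)/N * w)) cb z := by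
      apply ContinuousWithinAt.comp (hF _ hmem1)
        ((continuousWithinAt_const).mul continuousWithinAt_id)
      intro w hw
      have := hscale (i+1) hi w hw
      push_cast at this
      exact this
    have hc0 : ContinuousWithinAt (fun w => F ((i:ℂ)/N * w)) cb z := by
      apply ContinuousWithinAt.comp (hF _ hmem0)
        ((continuousWithinAt_const).mul continuousWithinAt_id)
      intro w hw
      exact hscale i (le_of_lt hi) w hw
    exact (hc1.div hc0 (h0 _ hmem0)).clog (mem_slit_of_near_one (hratio i hi z hz))
  · intro z hz
    rw [Complex.exp_add, Complex.exp_sum]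
    have hF0 : Complex.exp (Complex.log (F 0)) = F 0 :=
      Complex.exp_log (h0 0 (by simp [hcb, hR]))
    have hprod : ∀ i ∈ Finset.range N,
        Complex.exp (Complex.log (F (((i:ℂ)+1)/N * z) / F ((i:ℂ)/N * z)))
          = (fun j : ℕ => F ((j:ℂ)/N * z)) (i + 1) / (fun j : ℕ => F ((j:ℂ)/N * z)) i := by
      intro i hi
      rw [Finset.mem_range] at hi
      have hmem1 : ((i:ℂ)+1)/N * z ∈ cb := by
        have := hscale (i+1) hi z hz
        push_cast at this
        exact this
      have e1 : ((i+1:ℕ):ℂ) / N * z = ((i:ℂ)+1)/N * z := by push_cast; ring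
      show Complex.exp (Complex.log (F (((i:ℂ)+1)/N * z) / F ((i:ℂ)/N * z)))
          = F (((i+1:ℕ):ℂ)/N * z) / F ((i:ℂ)/N * z)
      rw [e1]
      exact Complex.exp_log (div_ne_zero (h0 _ hmem1) (h0 _ (hscale i (le_of_lt hi) z hz)))
    rw [Finset.prod_congr rfl hprod,
      telescope_prod _ N (fun i hi => h0 _ (hscale i hi z hz))]
    have e2 : ((N:ℂ)/N) * z = z := by
      rw [div_self (by exact_mod_cast hNR.ne' : (N:ℂ) ≠ 0), one_mul]
    have e3 : ((0:ℕ):ℂ)/N * z = 0 := by simp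
    rw [e2, e3, hF0]
    have hF0ne : F 0 ≠ 0 := h0 0 (by simp [hcb, hR])
    rw [mul_comm, div_mul_cancel₀ _ hF0ne]

lemma isPathConnected_outer {R : ℝ} (hR : 0 ≤ R) :
    IsPathConnected {z : ℂ | R < ‖z‖} := by
  have h1 : IsPathConnected ((Set.Ioi R) ×ˢ (univ : Set ℝ)) :=
    ((convex_Ioi R).prod convex_univ).isPathConnected
      ⟨(R + 1, 0), Set.mem_prod.mpr ⟨Set.mem_Ioi.mpr (lt_add_one R), mem_univ 0⟩⟩
  have hcont : Continuous (fun p : ℝ × ℝ => (p.1 : ℂ) * Complex.exp (p.2 * I)) := by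
    apply Continuous.mul
    · exact Complex.continuous_ofReal.comp continuous_fst
    · exact Complex.continuous_exp.comp
        ((Complex.continuous_ofReal.comp continuous_snd).mul continuous_const)
  have h2 := h1.image hcont
  have heq : (fun p : ℝ × ℝ => (p.1 : ℂ) * Complex.exp (p.2 * I)) '' (Set.Ioi R ×ˢ univ)
      = {z : ℂ | R < ‖z‖} := by
    ext z
    constructor
    · rintro ⟨⟨r, θ⟩, ⟨hr, -⟩, rfl⟩
      simp only [mem_setOf_eq, norm_mul, Complex.norm_real, Real.norm_eq_abs, Complex.norm_exp_ofReal_mul_I,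
        mul_one]
      rw [abs_of_pos (lt_of_le_of_lt hR hr)]
      exact hr
    · intro hz
      refine ⟨(‖z‖, z.arg), ⟨hz, mem_univ _⟩, ?_⟩
      exact Complex.norm_mul_exp_arg_mul_I z
  rwa [heq] at h2

lemma no_log_on_sphere {R : ℝ} {a : ℂ} (ha : ‖a‖ < R) {G : ℂ → ℂ}
    (hG : ContinuousOn G (sphere 0 R))
    (hexp : ∀ z ∈ sphere (0:ℂ) R, Complex.exp (G z) = z - a) : False := by
  have hR0 : 0 < R := lt_of_le_of_lt (norm_nonneg a) ha
  have hRC : (R:ℂ) ≠ 0 := by exact_mod_cast hR0.ne'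
  set z : ℝ → ℂ := fun θ => (R:ℂ) * Complex.exp (θ * I) with hzdef
  have hz : ∀ θ, z θ ∈ sphere (0:ℂ) R := by
    intro θ
    rw [mem_sphere_zero_iff_norm]
    simp only [hzdef, norm_mul, Complex.norm_real, Real.norm_eq_abs,
      Complex.norm_exp_ofReal_mul_I, mul_one]
    exact abs_of_pos hR0
  set w : ℝ → ℂ := fun θ => 1 - (a / R) * Complex.exp (-(θ * I)) with hwdef
  have habsw : ∀ θ, ‖w θ - 1‖ < 1 := by
    intro θ
    have : w θ - 1 = -((a / R) * Complex.exp (((-θ : ℝ) : ℂ) * I)) := by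
      simp only [hwdef]; push_cast; ring_nf
    rw [this, norm_neg, norm_mul, Complex.norm_exp_ofReal_mul_I, mul_one, norm_div,
      Complex.norm_real, Real.norm_eq_abs, abs_of_pos hR0]
    rw [div_lt_one hR0]
    exact ha
  have hwne : ∀ θ, w θ ≠ 0 := by
    intro θ h0
    have := habsw θ
    rw [h0] at this
    simp at this
  have hwslit : ∀ θ, w θ ∈ Complex.slitPlane := fun θ => mem_slit_of_near_one (habsw θ)
  set u : ℝ → ℂ := fun θ =>
    G (z θ) - (((Real.log R : ℝ) : ℂ) + θ * I + Complex.log (w θ)) with hudef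
  have hzsub : ∀ θ : ℝ, (R:ℂ) * Complex.exp ((θ:ℂ) * I) * w θ = z θ - a := by
    intro θ
    have hee : Complex.exp ((θ:ℂ) * I) * Complex.exp (-((θ:ℂ) * I)) = 1 := by
      rw [← Complex.exp_add]; simp
    simp only [hwdef, hzdef]
    have h1 : (R:ℂ) * Complex.exp ((θ:ℂ) * I) * (a / ↑R * Complex.exp (-((θ:ℂ) * I)))
        = a * ((R:ℂ)/R) * (Complex.exp ((θ:ℂ) * I) * Complex.exp (-((θ:ℂ) * I))) := by ring
    rw [mul_sub, mul_one, h1, div_self hRC, hee, mul_one, mul_one]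
  have hzane : ∀ θ, z θ - a ≠ 0 := by
    intro θ
    rw [← hzsub θ]
    exact mul_ne_zero (mul_ne_zero hRC (Complex.exp_ne_zero _)) (hwne θ)
  have hexpu : ∀ θ, Complex.exp (u θ) = 1 := by
    intro θ
    rw [hudef]
    simp only
    rw [Complex.exp_sub, hexp _ (hz θ)]
    rw [Complex.exp_add, Complex.exp_add, Complex.exp_log (hwne θ)]
    have hexplog : Complex.exp ((Real.log R : ℝ) : ℂ) = (R : ℂ) := by
      rw [← Complex.ofReal_exp, Real.exp_log hR0]
    rw [hexplog, ← hzsub θ]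
    rw [div_self (mul_ne_zero (mul_ne_zero hRC (Complex.exp_ne_zero _)) (hwne θ))]
  have hucont : Continuous u := by
    apply Continuous.sub
    · apply hG.comp_continuous
      · exact continuous_const.mul (Complex.continuous_exp.comp
          ((Complex.continuous_ofReal).mul continuous_const))
      · exact hz
    · apply Continuous.add
      · exact continuous_const.add ((Complex.continuous_ofReal).mul continuous_const)
      · have hwcont : Continuous w := by
          apply Continuous.sub continuous_const
          exact continuous_const.mul (Complex.continuous_exp.comp
            (((Complex.continuous_ofReal).mul continuous_const).neg))
        rw [continuous_iff_continuousAt]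
        intro θ
        exact hwcont.continuousAt.clog (hwslit θ)
  have hlat : ∀ θ, ∃ k : ℤ, u θ = (k : ℂ) * (2 * Real.pi * I) :=
    fun θ => Complex.exp_eq_one_iff.mp (hexpu θ)
  set v : ℝ → ℝ := fun θ => (u θ).im with hvdef
  have hvcont : Continuous v := Complex.continuous_im.comp hucont
  have hvlat : ∀ θ, ∃ k : ℤ, v θ = 2 * Real.pi * k := by
    intro θ
    obtain ⟨k, hk⟩ := hlat θ
    refine ⟨k, ?_⟩
    have him : (u θ).im = ((k:ℂ) * (2 * Real.pi * I)).im := by rw [hk]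
    rw [hvdef]
    simp only
    rw [him]
    simp [Complex.mul_im, Complex.mul_re]
    ring
  -- v 0 = v (2π) via IVT parity argument
  have hpi : (0:ℝ) < Real.pi := Real.pi_pos
  have hveq : v 0 = v (2 * Real.pi) := by
    by_contra hne
    obtain ⟨k0, hk0⟩ := hvlat 0
    obtain ⟨k1, hk1⟩ := hvlat (2 * Real.pi)
    have hk01 : k0 ≠ k1 := by
      intro h; apply hne; rw [hk0, hk1, h]
    have h2pi : (0:ℝ) ≤ 2 * Real.pi := by linarith
    have key : ∀ c : ℝ, c ∈ Icc (v 0) (v (2*Real.pi)) ∪ Icc (v (2*Real.pi)) (v 0) →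
        ∃ θ ∈ Icc (0:ℝ) (2*Real.pi), v θ = c := by
      intro c hc
      rcases hc with hc | hc
      · obtain ⟨θ, hθ, hvθ⟩ := intermediate_value_Icc h2pi hvcont.continuousOn hc
        exact ⟨θ, hθ, hvθ⟩
      · obtain ⟨θ, hθ, hvθ⟩ := intermediate_value_Icc' h2pi hvcont.continuousOn hc
        exact ⟨θ, hθ, hvθ⟩
    rcases lt_or_gt_of_ne hk01 with hlt | hgt
    · have hc : (2 * (k0:ℝ) + 1) * Real.pi ∈ Icc (v 0) (v (2*Real.pi)) := by
        rw [hk0, hk1]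
        constructor
        · nlinarith
        · have : (k0:ℝ) + 1 ≤ (k1:ℝ) := by exact_mod_cast hlt
          nlinarith
      obtain ⟨θ, -, hvθ⟩ := key _ (Or.inl hc)
      obtain ⟨k, hk⟩ := hvlat θ
      rw [hk] at hvθ
      have hcan : (2 * (k:ℝ)) * Real.pi = (2 * (k0:ℝ) + 1) * Real.pi := by
        linear_combination hvθ
      have : 2 * (k:ℝ) = 2 * (k0:ℝ) + 1 := mul_right_cancel₀ hpi.ne' hcan
      have : (2 * k : ℤ) = 2 * k0 + 1 := by exact_mod_cast this
      omega
    · have hc : (2 * (k1:ℝ) + 1) * Real.pi ∈ Icc (v (2*Real.pi)) (v 0) := by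
        rw [hk0, hk1]
        constructor
        · nlinarith
        · have : (k1:ℝ) + 1 ≤ (k0:ℝ) := by exact_mod_cast hgt
          nlinarith
      obtain ⟨θ, -, hvθ⟩ := key _ (Or.inr hc)
      obtain ⟨k, hk⟩ := hvlat θ
      rw [hk] at hvθ
      have hcan : (2 * (k:ℝ)) * Real.pi = (2 * (k1:ℝ) + 1) * Real.pi := by
        linear_combination hvθ
      have : 2 * (k:ℝ) = 2 * (k1:ℝ) + 1 := mul_right_cancel₀ hpi.ne' hcan
      have : (2 * k : ℤ) = 2 * k1 + 1 := by exact_mod_cast this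
      omega
  -- but u 0 - u (2π) = 2π I
  have hz02 : z 0 = z (2 * Real.pi) := by
    simp only [hzdef]
    push_cast
    rw [Complex.exp_two_pi_mul_I]
    simp
  have hexp2pi : Complex.exp (-(((2 * Real.pi : ℝ) : ℂ) * I)) = 1 := by
    rw [Complex.exp_neg]
    push_cast
    rw [Complex.exp_two_pi_mul_I, inv_one]
  have hexp0 : Complex.exp (-(((0 : ℝ) : ℂ) * I)) = 1 := by norm_num
  have hw02 : w 0 = w (2 * Real.pi) := by
    simp only [hwdef, hexp0, hexp2pi]
  have hdiff : u 0 - u (2 * Real.pi) = 2 * (Real.pi : ℂ) * I := by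
    simp only [hudef, hz02, hw02]
    push_cast
    ring
  have himeq : v 0 - v (2 * Real.pi) = 2 * Real.pi := by
    rw [hvdef]
    simp only
    rw [← Complex.sub_im, hdiff]
    simp
  rw [hveq, sub_self] at himeq
  linarith

lemma frontier_ccIn_subset {X : Type*} [TopologicalSpace X] [LocallyConnectedSpace X]
    {W : Set X} (hW : IsClosed W) (x : X) :
    frontier (connectedComponentIn Wᶜ x) ⊆ W := by
  intro p hp
  by_contra hpW
  have hVo : IsOpen (connectedComponentIn Wᶜ x) := hW.isOpen_compl.connectedComponentIn
  rw [frontier, hVo.interior_eq] at hp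
  obtain ⟨hpc, hpV⟩ := hp
  have hpO : p ∈ Wᶜ := hpW
  have hopen : IsOpen (connectedComponentIn Wᶜ p) := hW.isOpen_compl.connectedComponentIn
  have hnbd : connectedComponentIn Wᶜ p ∈ 𝓝 p :=
    hopen.mem_nhds (mem_connectedComponentIn hpO)
  obtain ⟨q, hq1, hq2⟩ := mem_closure_iff_nhds.mp hpc _ hnbd
  have e1 : connectedComponentIn Wᶜ p = connectedComponentIn Wᶜ q :=
    connectedComponentIn_eq hq1
  have e2 : connectedComponentIn Wᶜ x = connectedComponentIn Wᶜ q :=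
    connectedComponentIn_eq hq2
  exact hpV (by rw [e2, ← e1]; exact mem_connectedComponentIn hpO)

lemma core_contradiction {W : Set ℂ} (hWc : IsCompact W) {a b : ℂ} {g : ℂ → ℂ}
    (hg : ContinuousOn g W) (hexp : ∀ z ∈ W, Complex.exp (g z) = (z - a) / (z - b))
    (ha : a ∉ W) (hb : b ∉ W) (hbV : b ∉ connectedComponentIn Wᶜ a)
    {R₀ : ℝ} (hR₀ : 0 ≤ R₀) (hWb : W ⊆ closedBall 0 R₀)
    (hbound : connectedComponentIn Wᶜ a ⊆ closedBall 0 R₀) : False := by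
  classical
  set V := connectedComponentIn Wᶜ a with hV
  have haV : a ∈ V := mem_connectedComponentIn ha
  -- Tietze extension of re and im parts of g
  obtain ⟨Gre, hGre⟩ := ContinuousMap.exists_restrict_eq (Y := ℝ) hWc.isClosed
    ⟨_, Complex.continuous_re.comp hg.restrict⟩
  obtain ⟨Gim, hGim⟩ := ContinuousMap.exists_restrict_eq (Y := ℝ) hWc.isClosed
    ⟨_, Complex.continuous_im.comp hg.restrict⟩
  set gext : ℂ → ℂ := fun z => (Gre z : ℂ) + (Gim z : ℂ) * I with hgext
  have hgextW : ∀ z ∈ W, gext z = g z := by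
    intro z hz
    have h1 := DFunLike.congr_fun hGre (⟨z, hz⟩ : W)
    have h2 := DFunLike.congr_fun hGim (⟨z, hz⟩ : W)
    simp only [ContinuousMap.restrict_apply, ContinuousMap.coe_mk] at h1 h2
    rw [hgext]
    simp only
    rw [h1, h2]
    exact Complex.re_add_im (g z)
  have hgextcont : Continuous gext := by
    apply Continuous.add
    · exact Complex.continuous_ofReal.comp Gre.continuous
    · exact (Complex.continuous_ofReal.comp Gim.continuous).mul continuous_const
  set F : ℂ → ℂ := fun z => if z ∈ V then (z - b) * Complex.exp (gext z) else z - a with hF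
  have hfr : frontier V ⊆ W := frontier_ccIn_subset hWc.isClosed a
  have hFcont : Continuous F := by
    apply Continuous.if
    · intro p hp
      have hpW : p ∈ W := hfr (by rwa [Set.setOf_mem_eq] at hp)
      have hpb : p - b ≠ 0 := sub_ne_zero.mpr (fun h => hb (h ▸ hpW))
      rw [hgextW p hpW, hexp p hpW]
      field_simp
    · exact (continuous_id.sub continuous_const).mul (Complex.continuous_exp.comp hgextcont)
    · exact continuous_id.sub continuous_const
  have hFne : ∀ z, F z ≠ 0 := by
    intro z
    rw [hF]
    simp only
    by_cases hzV : z ∈ V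
    · rw [if_pos hzV]
      exact mul_ne_zero (sub_ne_zero.mpr (fun h => hbV (h ▸ hzV))) (Complex.exp_ne_zero _)
    · rw [if_neg hzV]
      exact sub_ne_zero.mpr (fun h => hzV (h ▸ haV))
  set R := R₀ + 1 with hRdef
  have hR : (0:ℝ) < R := by linarith
  have haR : ‖a‖ < R := by
    have := hbound haV
    rw [mem_closedBall, dist_zero_right] at this
    linarith
  obtain ⟨G, hGcont, hGexp⟩ := exists_log_closedBall hR.le hFcont.continuousOn
    (fun z _ => hFne z)
  apply no_log_on_sphere haR (hGcont.mono sphere_subset_closedBall)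
  intro z hzs
  rw [hGexp z (sphere_subset_closedBall hzs)]
  have hzV : z ∉ V := by
    intro hzmem
    have h1 := hbound hzmem
    rw [mem_closedBall, dist_zero_right] at h1
    rw [mem_sphere_zero_iff_norm] at hzs
    rw [hzs] at h1
    linarith
  rw [hF]
  simp only
  rw [if_neg hzV]

lemma mem_ccIn_of_hasLogOn {W : Set ℂ} (hWc : IsCompact W) {x y : ℂ}
    (hx : x ∉ W) (hy : y ∉ W) (h : HasLogOn W x y) : y ∈ connectedComponentIn Wᶜ x := by
  by_contra hyV
  obtain ⟨r, hr⟩ := hWc.isBounded.subset_closedBall 0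
  set R₀ := max r 0 with hR₀def
  have hR₀ : (0:ℝ) ≤ R₀ := le_max_right r 0
  have hWb : W ⊆ closedBall 0 R₀ := hr.trans (closedBall_subset_closedBall (le_max_left r 0))
  have houter : {z : ℂ | R₀ < ‖z‖} ⊆ Wᶜ := by
    intro z hz hzW
    have := hWb hzW
    rw [mem_closedBall, dist_zero_right] at this
    exact absurd this (not_le.mpr hz)
  by_cases hxb : connectedComponentIn Wᶜ x ⊆ closedBall 0 R₀
  · obtain ⟨g, hg, hexp⟩ := h
    exact core_contradiction hWc hg hexp hx hy hyV hR₀ hWb hxb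
  · by_cases hyb : connectedComponentIn Wᶜ y ⊆ closedBall 0 R₀
    · obtain ⟨g, hg, hexp⟩ := h
      have hexp' : ∀ z ∈ W, Complex.exp (-g z) = (z - y) / (z - x) := by
        intro z hz
        rw [Complex.exp_neg, hexp z hz, inv_div]
      have hxy' : x ∉ connectedComponentIn Wᶜ y := by
        intro hmem
        apply hyV
        rw [← connectedComponentIn_eq hmem]
        exact mem_connectedComponentIn hy
      exact core_contradiction hWc hg.neg hexp' hy hx hxy' hR₀ hWb hyb
    · obtain ⟨p, hpV, hpB⟩ := not_subset.mp hxb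
      obtain ⟨q, hqV, hqB⟩ := not_subset.mp hyb
      have hpo : p ∈ {z : ℂ | R₀ < ‖z‖} := by
        rw [mem_setOf_eq]
        by_contra hle
        exact hpB (by rw [mem_closedBall, dist_zero_right]; linarith [not_lt.mp hle])
      have hqo : q ∈ {z : ℂ | R₀ < ‖z‖} := by
        rw [mem_setOf_eq]
        by_contra hle
        exact hqB (by rw [mem_closedBall, dist_zero_right]; linarith [not_lt.mp hle])
      have hsub : {z : ℂ | R₀ < ‖z‖} ⊆ connectedComponentIn Wᶜ p :=
        ((isPathConnected_outer hR₀).isConnected.isPreconnected).subset_connectedComponentIn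
          hpo houter
      have e1 : connectedComponentIn Wᶜ x = connectedComponentIn Wᶜ p :=
        connectedComponentIn_eq hpV
      have e2 : connectedComponentIn Wᶜ y = connectedComponentIn Wᶜ q :=
        connectedComponentIn_eq hqV
      have e3 : connectedComponentIn Wᶜ p = connectedComponentIn Wᶜ q :=
        connectedComponentIn_eq (hsub hqo)
      apply hyV
      rw [e1, e3, ← e2]
      exact mem_connectedComponentIn hy

lemma lattice_const {A : Set ℂ} (hA : IsPreconnected A) {ψ : ℂ → ℂ}
    (hψ : ContinuousOn ψ A)
    (hval : ∀ z ∈ A, ∃ k : ℤ, ψ z = (k : ℂ) * (2 * Real.pi * I)) :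
    ∀ z ∈ A, ∀ w ∈ A, ψ z = ψ w := by
  have hpi : (0:ℝ) < Real.pi := Real.pi_pos
  have him : ∀ z ∈ A, ∃ k : ℤ, (ψ z).im = 2 * Real.pi * k := by
    intro z hz
    obtain ⟨k, hk⟩ := hval z hz
    refine ⟨k, ?_⟩
    rw [hk]
    simp [Complex.mul_im, Complex.mul_re]
    ring
  have hkeq : ∀ z ∈ A, ∀ w ∈ A, (ψ z).im = (ψ w).im := by
    intro z hz w hw
    obtain ⟨kz, hkz⟩ := him z hz
    obtain ⟨kw, hkw⟩ := him w hw
    rcases lt_trichotomy kz kw with hlt | heq | hgt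
    · exfalso
      have hB := (hA.image (fun u => (ψ u).im)
        (Complex.continuous_im.comp_continuousOn hψ)).ordConnected
      have hc : (2 * (kz:ℝ) + 1) * Real.pi ∈ Icc ((ψ z).im) ((ψ w).im) := by
        rw [hkz, hkw]
        constructor
        · nlinarith
        · have : (kz:ℝ) + 1 ≤ (kw:ℝ) := by exact_mod_cast hlt
          nlinarith
      have hmem := hB.out (mem_image_of_mem _ hz) (mem_image_of_mem _ hw) hc
      obtain ⟨u, hu, huv⟩ := hmem
      obtain ⟨k, hk⟩ := him u hu
      have huv' : (ψ u).im = (2 * (kz:ℝ) + 1) * Real.pi := huv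
      rw [hk] at huv'
      have hcan : (2 * (k:ℝ)) * Real.pi = (2 * (kz:ℝ) + 1) * Real.pi := by
        linear_combination huv'
      have h2 : 2 * (k:ℝ) = 2 * (kz:ℝ) + 1 := mul_right_cancel₀ hpi.ne' hcan
      have : (2 * k : ℤ) = 2 * kz + 1 := by exact_mod_cast h2
      omega
    · rw [hkz, hkw, heq]
    · exfalso
      have hB := (hA.image (fun u => (ψ u).im)
        (Complex.continuous_im.comp_continuousOn hψ)).ordConnected
      have hc : (2 * (kw:ℝ) + 1) * Real.pi ∈ Icc ((ψ w).im) ((ψ z).im) := by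
        rw [hkz, hkw]
        constructor
        · nlinarith
        · have : (kw:ℝ) + 1 ≤ (kz:ℝ) := by exact_mod_cast hgt
          nlinarith
      have hmem := hB.out (mem_image_of_mem _ hw) (mem_image_of_mem _ hz) hc
      obtain ⟨u, hu, huv⟩ := hmem
      obtain ⟨k, hk⟩ := him u hu
      have huv' : (ψ u).im = (2 * (kw:ℝ) + 1) * Real.pi := huv
      rw [hk] at huv'
      have hcan : (2 * (k:ℝ)) * Real.pi = (2 * (kw:ℝ) + 1) * Real.pi := by
        linear_combination huv'
      have h2 : 2 * (k:ℝ) = 2 * (kw:ℝ) + 1 := mul_right_cancel₀ hpi.ne' hcan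
      have : (2 * k : ℤ) = 2 * kw + 1 := by exact_mod_cast h2
      omega
  intro z hz w hw
  obtain ⟨kz, hkz⟩ := hval z hz
  obtain ⟨kw, hkw⟩ := hval w hw
  have h1 := hkeq z hz w hw
  rw [hkz, hkw] at h1 ⊢
  have h2 : ((kz:ℂ) * (2 * Real.pi * I)).im = 2 * Real.pi * kz := by
    simp [Complex.mul_im, Complex.mul_re]; ring
  have h3 : ((kw:ℂ) * (2 * Real.pi * I)).im = 2 * Real.pi * kw := by
    simp [Complex.mul_im, Complex.mul_re]; ring
  rw [h2, h3] at h1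
  have hpi2 : (2:ℝ) * Real.pi ≠ 0 := by positivity
  have hcast : (kz:ℝ) = kw := mul_left_cancel₀ hpi2 h1
  have : kz = kw := by exact_mod_cast hcast
  rw [this]

lemma janiszewski {S T : Set ℂ} (hS : IsCompact S) (hT : IsCompact T)
    (hST : IsPreconnected (S ∩ T)) {x y : ℂ} (hxS : x ∉ S) (hxT : x ∉ T)
    (hyS : y ∉ S) (hyT : y ∉ T)
    (h1 : y ∈ connectedComponentIn Sᶜ x) (h2 : y ∈ connectedComponentIn Tᶜ x) :
    y ∈ connectedComponentIn (S ∪ T)ᶜ x := by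
  classical
  obtain ⟨gS, hgS, heS⟩ := hasLogOn_of_joinedIn hS
    (joinedIn_of_mem_ccIn hS.isClosed.isOpen_compl h1)
  obtain ⟨gT, hgT, heT⟩ := hasLogOn_of_joinedIn hT
    (joinedIn_of_mem_ccIn hT.isClosed.isOpen_compl h2)
  -- the difference is a constant lattice element on S ∩ T
  have hlat : ∀ z ∈ S ∩ T, ∃ k : ℤ, gS z - gT z = (k : ℂ) * (2 * Real.pi * I) := by
    intro z hz
    rw [← Complex.exp_eq_one_iff, Complex.exp_sub, heS z hz.1, ← heT z hz.2]
    have hne : Complex.exp (gT z) ≠ 0 := Complex.exp_ne_zero _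
    rw [heT z hz.2] at hne
    rw [heT z hz.2]
    exact div_self hne
  have hconst := lattice_const hST (hgS.mono inter_subset_left |>.sub
    (hgT.mono inter_subset_right)) hlat
  set c : ℂ := if hne : (S ∩ T).Nonempty then gS hne.some - gT hne.some else 0 with hc
  have hcval : ∀ z ∈ S ∩ T, gS z - gT z = c := by
    intro z hz
    rw [hc, dif_pos ⟨z, hz⟩]
    exact hconst z hz _ (Set.Nonempty.some_mem ⟨z, hz⟩)
  have hexpc : Complex.exp c = 1 := by
    rw [hc]
    split_ifs with hne
    · rw [Complex.exp_sub, heS _ hne.some_mem.1, ← heT _ hne.some_mem.2]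
      have hne2 : Complex.exp (gT hne.some) ≠ 0 := Complex.exp_ne_zero _
      rw [heT _ hne.some_mem.2] at hne2
      rw [heT _ hne.some_mem.2]
      exact div_self hne2
    · exact Complex.exp_zero
  set gU : ℂ → ℂ := fun z => if z ∈ S then gS z else gT z + c with hgU
  have hagreeT : ∀ z ∈ T, gU z = gT z + c := by
    intro z hz
    rw [hgU]
    simp only
    by_cases hzS : z ∈ S
    · rw [if_pos hzS, ← hcval z ⟨hzS, hz⟩]; ring
    · rw [if_neg hzS]
  have hagreeS : ∀ z ∈ S, gU z = gS z := by
    intro z hz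
    rw [hgU]
    simp only
    rw [if_pos hz]
  have hgUcont : ContinuousOn gU (S ∪ T) := by
    intro z hz
    apply ContinuousWithinAt.union
    · by_cases hzS : z ∈ S
      · exact ((hgS z hzS).congr hagreeS (hagreeS z hzS))
      · exact continuousWithinAt_of_notMem_closure (by
          rwa [hS.isClosed.closure_eq])
    · by_cases hzT : z ∈ T
      · exact (((hgT z hzT).add continuousWithinAt_const).congr hagreeT (hagreeT z hzT))
      · exact continuousWithinAt_of_notMem_closure (by
          rwa [hT.isClosed.closure_eq])
  have hgUexp : ∀ z ∈ S ∪ T, Complex.exp (gU z) = (z - x) / (z - y) := by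
    intro z hz
    by_cases hzS : z ∈ S
    · rw [hagreeS z hzS]
      exact heS z hzS
    · have hzT : z ∈ T := hz.resolve_left hzS
      rw [hagreeT z hzT, Complex.exp_add, hexpc, mul_one]
      exact heT z hzT
  exact mem_ccIn_of_hasLogOn (hS.union hT)
    (fun h => h.elim hxS hxT) (fun h => h.elim hyS hyT) ⟨gU, hgUcont, hgUexp⟩

lemma exists_clopen_piece {K' : Set ℂ} (hK : IsCompact K') {z : ℂ} (hz : z ∈ K')
    {P : Set ℂ} (hP : IsCompact P)
    (hdisj : ∀ p ∈ P, p ∉ connectedComponentIn K' z) :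
    ∃ O : Set ℂ, IsOpen O ∧ z ∈ O ∧ IsCompact (K' ∩ O) ∧ ∀ p ∈ P, p ∉ K' ∩ O := by
  haveI : CompactSpace ↥K' := isCompact_iff_compactSpace.mp hK
  set ζ : ↥K' := ⟨z, hz⟩ with hζ
  have hcc := connectedComponent_eq_iInter_isClopen ζ
  set P' : Set ↥K' := Subtype.val ⁻¹' P with hP'
  have hP'c : IsClosed P' := IsClosed.preimage continuous_subtype_val hP.isClosed
  have hP'comp : IsCompact P' := hP'c.isCompact
  have hint : P' ∩ ⋂ (s : {s : Set ↥K' // IsClopen s ∧ ζ ∈ s}), (s : Set ↥K') = ∅ := by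
    rw [eq_empty_iff_forall_notMem]
    rintro q ⟨hq1, hq2⟩
    rw [← hcc] at hq2
    have hqc : (q : ℂ) ∈ connectedComponentIn K' z := by
      rw [connectedComponentIn_eq_image hz]
      exact ⟨q, hq2, rfl⟩
    exact hdisj _ hq1 hqc
  obtain ⟨u, hu⟩ := hP'comp.elim_finite_subfamily_closed _
    (fun s => s.2.1.isClosed) hint
  set Q' : Set ↥K' := ⋂ s ∈ u, (s : {s : Set ↥K' // IsClopen s ∧ ζ ∈ s}).1 with hQ'
  have hQ'open : IsOpen Q' := isOpen_biInter_finset (fun s _ => s.2.1.isOpen)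
  have hQ'closed : IsClosed Q' := isClosed_biInter (fun s _ => s.2.1.isClosed)
  have hζQ' : ζ ∈ Q' := mem_iInter₂.mpr (fun s _ => s.2.2)
  obtain ⟨O, hOopen, hOpre⟩ := isOpen_induced_iff.mp hQ'open
  have himg : Subtype.val '' Q' = K' ∩ O := by
    rw [← hOpre]
    rw [Subtype.image_preimage_coe]
  refine ⟨O, hOopen, ?_, ?_, ?_⟩
  · have : (ζ : ℂ) ∈ Subtype.val '' Q' := mem_image_of_mem _ hζQ'
    rw [himg] at this
    exact this.2
  · rw [← himg]
    exact (hQ'closed.isCompact).image continuous_subtype_val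
  · intro p hpP hpKO
    have hpK : p ∈ K' := hpKO.1
    have hpQ' : (⟨p, hpK⟩ : ↥K') ∈ Q' := by
      rw [← hOpre]
      exact hpKO.2
    have : (⟨p, hpK⟩ : ↥K') ∈ P' ∩ ⋂ s ∈ u, (s : {s : Set ↥K' // IsClopen s ∧ ζ ∈ s}).1 :=
      ⟨hpP, hpQ'⟩
    rw [hu] at this
    exact this

lemma mainC {Γ K' : Set ℂ} (hΓc : IsCompact Γ) (hΓpc : IsPreconnected Γ)
    (hKc : IsCompact K') {x y : ℂ} (hxK : x ∉ K') (hyK : y ∉ K')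
    (hΓm : y ∈ connectedComponentIn Γᶜ x)
    (hsep : y ∉ connectedComponentIn (Γ ∪ K')ᶜ x) :
    ∃ z ∈ K', y ∉ connectedComponentIn (Γ ∪ connectedComponentIn K' z)ᶜ x := by
  by_contra hall
  push_neg at hall
  have hxΓ : x ∉ Γ := by
    have hne : (connectedComponentIn Γᶜ x).Nonempty := ⟨y, hΓm⟩
    exact connectedComponentIn_nonempty_iff.mp hne
  have hyΓ : y ∉ Γ := connectedComponentIn_subset _ _ hΓm
  have hchoice : ∀ z ∈ K', ∃ O : Set ℂ, IsOpen O ∧ z ∈ O ∧ IsCompact (K' ∩ O) ∧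
      y ∈ connectedComponentIn (Γ ∪ (K' ∩ O))ᶜ x := by
    intro z hz
    have hC : IsCompact (connectedComponentIn K' z) := by
      haveI : CompactSpace ↥K' := isCompact_iff_compactSpace.mp hKc
      rw [connectedComponentIn_eq_image hz]
      exact (isClosed_connectedComponent.isCompact).image continuous_subtype_val
    have hopen : IsOpen (Γ ∪ connectedComponentIn K' z)ᶜ :=
      (hΓc.union hC).isClosed.isOpen_compl
    obtain ⟨γ, hγ⟩ := joinedIn_of_mem_ccIn hopen (hall z hz)
    have hPc : IsCompact (range γ) := isCompact_range γ.continuous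
    have hPdisj : ∀ p ∈ range γ, p ∉ connectedComponentIn K' z := by
      rintro p ⟨t, rfl⟩ hmem
      exact (hγ t) (Or.inr hmem)
    obtain ⟨O, hO1, hO2, hO3, hO4⟩ := exists_clopen_piece hKc hz hPc hPdisj
    refine ⟨O, hO1, hO2, hO3, ?_⟩
    have hPsub : range γ ⊆ (Γ ∪ (K' ∩ O))ᶜ := by
      rintro p ⟨t, rfl⟩ (hp | hp)
      · exact (hγ t) (Or.inl hp)
      · exact hO4 _ ⟨t, rfl⟩ hp
    have hPconn : IsPreconnected (range γ) :=
      (isConnected_range γ.continuous).isPreconnected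
    exact (hPconn.subset_connectedComponentIn ⟨0, γ.source⟩ hPsub) ⟨1, γ.target⟩
  choose! O hOopen hOz hOcomp hOsep using hchoice
  have hcover : K' ⊆ ⋃ z ∈ K', O z := fun z hz => mem_biUnion hz (hOz z hz)
  obtain ⟨b, hbsub, hbfin, hbcov⟩ :=
    hKc.elim_finite_subcover_image (fun z hz => hOopen z hz) hcover
  set s₀ := hbfin.toFinset with hs₀
  have hs₀sub : ∀ w ∈ s₀, w ∈ K' := by
    intro w hw
    rw [hs₀, Set.Finite.mem_toFinset] at hw
    exact hbsub hw
  have hs₀cov : K' ⊆ ⋃ w ∈ s₀, O w := by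
    intro z hz
    obtain ⟨w, hw, hmem⟩ := mem_iUnion₂.mp (hbcov hz)
    exact mem_biUnion (hbfin.mem_toFinset.mpr hw) hmem
  have hind : ∀ s : Finset ℂ, (∀ w ∈ s, w ∈ K') →
      y ∈ connectedComponentIn (Γ ∪ (K' ∩ ⋃ w ∈ s, O w))ᶜ x := by
    intro s
    induction s using Finset.induction_on with
    | empty =>
      intro _
      have : Γ ∪ (K' ∩ ⋃ w ∈ (∅ : Finset ℂ), O w) = Γ := by simp
      rw [this]
      exact hΓm
    | @insert a s ha ih =>
      intro hmem
      have haK : a ∈ K' := hmem a (Finset.mem_insert_self a s)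
      have hsK : ∀ w ∈ s, w ∈ K' := fun w hw => hmem w (Finset.mem_insert_of_mem hw)
      set D : Set ℂ := ⋃ w ∈ s, O w with hD
      have hDopen : IsOpen D := isOpen_biUnion (fun w hw => hOopen w (hsK w hw))
      have hKD : IsCompact (K' ∩ D) := by
        have he : K' ∩ D = ⋃ w ∈ s, (K' ∩ O w) := by
          rw [hD, inter_iUnion₂]
        rw [he]
        exact s.finite_toSet.isCompact_biUnion (fun w hw => hOcomp w (hsK w (by exact_mod_cast hw)))
      have hTc : IsCompact ((K' ∩ O a) \ D) := (hOcomp a haK).diff hDopen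
      have hS : IsCompact (Γ ∪ (K' ∩ D)) := hΓc.union hKD
      have hT : IsCompact (Γ ∪ ((K' ∩ O a) \ D)) := hΓc.union hTc
      have hAB : (K' ∩ D) ∩ ((K' ∩ O a) \ D) = ∅ := by
        rw [eq_empty_iff_forall_notMem]
        rintro p ⟨⟨-, hpD⟩, ⟨-, hpnD⟩⟩
        exact hpnD hpD
      have hST : (Γ ∪ (K' ∩ D)) ∩ (Γ ∪ ((K' ∩ O a) \ D)) = Γ := by
        rw [← union_inter_distrib_left, hAB, union_empty]
      have hxS : x ∉ Γ ∪ (K' ∩ D) := by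
        rintro (h | h)
        exacts [hxΓ h, hxK h.1]
      have hxT : x ∉ Γ ∪ ((K' ∩ O a) \ D) := by
        rintro (h | h)
        exacts [hxΓ h, hxK h.1.1]
      have hyS : y ∉ Γ ∪ (K' ∩ D) := by
        rintro (h | h)
        exacts [hyΓ h, hyK h.1]
      have hyT : y ∉ Γ ∪ ((K' ∩ O a) \ D) := by
        rintro (h | h)
        exacts [hyΓ h, hyK h.1.1]
      have hyTm : y ∈ connectedComponentIn (Γ ∪ ((K' ∩ O a) \ D))ᶜ x := by
        apply connectedComponentIn_mono x
          (compl_subset_compl.mpr (union_subset_union_right Γ diff_subset))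
        exact hOsep a haK
      have hun := janiszewski hS hT (by rw [hST]; exact hΓpc) hxS hxT hyS hyT (ih hsK) hyTm
      have hSTun : (Γ ∪ (K' ∩ D)) ∪ (Γ ∪ ((K' ∩ O a) \ D))
          = Γ ∪ (K' ∩ ⋃ w ∈ insert a s, O w) := by
        rw [Finset.set_biUnion_insert, inter_union_distrib_left]
        ext p
        constructor
        · rintro ((h | h) | (h | h))
          · exact Or.inl h
          · exact Or.inr (Or.inr ⟨h.1, h.2⟩)
          · exact Or.inl h
          · exact Or.inr (Or.inl ⟨h.1.1, h.1.2⟩)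
        · rintro (h | (h | h))
          · exact Or.inl (Or.inl h)
          · by_cases hpD : p ∈ D
            · exact Or.inl (Or.inr ⟨h.1, hpD⟩)
            · exact Or.inr (Or.inr ⟨⟨h.1, h.2⟩, hpD⟩)
          · exact Or.inl (Or.inr h)
      rw [hSTun] at hun
      exact hun
  have hfinal := hind s₀ hs₀sub
  rw [inter_eq_left.mpr hs₀cov] at hfinal
  exact hsep hfinal

lemma homeo_image_ccIn {X Y : Type*} [TopologicalSpace X] [TopologicalSpace Y] (e : X ≃ₜ Y)
    (s : Set X) (x : X) :
    e '' connectedComponentIn s x = connectedComponentIn (e '' s) (e x) := by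
  by_cases hx : x ∈ s
  · apply Subset.antisymm
    · apply IsPreconnected.subset_connectedComponentIn
      · exact isPreconnected_connectedComponentIn.image _ e.continuous.continuousOn
      · exact mem_image_of_mem e (mem_connectedComponentIn hx)
      · exact image_mono (f := e) (connectedComponentIn_subset s x)
    · intro w hw
      have h2 : e.symm '' connectedComponentIn (e '' s) (e x) ⊆ connectedComponentIn s x := by
        apply IsPreconnected.subset_connectedComponentIn
        · exact isPreconnected_connectedComponentIn.image _ e.symm.continuous.continuousOn
        · exact ⟨e x, mem_connectedComponentIn (mem_image_of_mem e hx), e.symm_apply_apply x⟩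
        · rintro v ⟨u, hu, huv⟩
          obtain ⟨t, ht, htu⟩ := connectedComponentIn_subset _ _ hu
          rwa [← huv, ← htu, e.symm_apply_apply]
      have hm : e.symm w ∈ connectedComponentIn s x := h2 (mem_image_of_mem _ hw)
      exact ⟨e.symm w, hm, e.apply_symm_apply w⟩
  · rw [connectedComponentIn_eq_empty hx,
      connectedComponentIn_eq_empty (fun h => hx (e.injective.mem_set_image.mp h)),
      image_empty]

lemma ccIn_diff_eq {X : Type*} [TopologicalSpace X] {Γ D : Set X} {u₀ x : X}
    (hxU : x ∈ connectedComponentIn Γᶜ u₀) (hxD : x ∉ D) :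
    connectedComponentIn (connectedComponentIn Γᶜ u₀ \ D) x
      = connectedComponentIn (Γ ∪ D)ᶜ x := by
  have hUx : connectedComponentIn Γᶜ u₀ = connectedComponentIn Γᶜ x :=
    connectedComponentIn_eq hxU
  have hxΓ : x ∉ Γ := connectedComponentIn_subset _ _ hxU
  apply Subset.antisymm
  · apply connectedComponentIn_mono
    rintro p ⟨hpU, hpD⟩ (h | h)
    · exact (connectedComponentIn_subset _ _ hpU) h
    · exact hpD h
  · apply IsPreconnected.subset_connectedComponentIn
    · exact isPreconnected_connectedComponentIn
    · exact mem_connectedComponentIn (fun h => h.elim hxΓ hxD)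
    · intro p hp
      refine ⟨?_, fun hD => (connectedComponentIn_subset _ _ hp) (Or.inr hD)⟩
      have hsub : connectedComponentIn (Γ ∪ D)ᶜ x ⊆ connectedComponentIn Γᶜ x :=
        connectedComponentIn_mono x (compl_subset_compl.mpr subset_union_left)
      rw [← hUx] at hsub
      exact hsub hp

theorem stmt12 (U K : Set (EuclideanSpace ℝ (Fin 2))) (hU : IsJordanDomain U)
    (hKc : IsCompact K) (hKconn : IsConnected K)
    (x y : EuclideanSpace ℝ (Fin 2)) (hx : x ∈ U \ K) (hy : y ∈ U \ K)
    (hsep : connectedComponentIn (U \ K) x ≠ connectedComponentIn (U \ K) y) :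
    ∃ C : Set (EuclideanSpace ℝ (Fin 2)),
      (∃ z ∈ K ∩ closure U, C = connectedComponentIn (K ∩ closure U) z) ∧
      connectedComponentIn (U \ C) x ≠ connectedComponentIn (U \ C) y := by
  classical
  obtain ⟨Γ, z₀, hΓcurve, hz₀, hUdef, hUbdd⟩ := hU
  obtain ⟨eΓ⟩ := hΓcurve
  -- Γ is a compact connected set
  have hrank : (1 : Cardinal) < Module.rank ℝ (EuclideanSpace ℝ (Fin 2)) := by
    have h := finrank_euclideanSpace_fin (𝕜 := ℝ) (n := 2)
    rw [← Module.finrank_eq_rank ℝ, h]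
    exact_mod_cast one_lt_two
  have hsphconn : IsConnected (sphere (0 : EuclideanSpace ℝ (Fin 2)) 1) :=
    isConnected_sphere hrank 0 zero_le_one
  haveI hconnsp : ConnectedSpace ↥(sphere (0 : EuclideanSpace ℝ (Fin 2)) 1) :=
    isConnected_iff_connectedSpace.mp hsphconn
  haveI hcompsp : CompactSpace ↥(sphere (0 : EuclideanSpace ℝ (Fin 2)) 1) :=
    isCompact_iff_compactSpace.mp (isCompact_sphere 0 1)
  have hrange : range (Subtype.val ∘ eΓ.symm) = Γ := by
    rw [range_comp, eΓ.symm.surjective.range_eq, image_univ, Subtype.range_coe]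
  have hΓcomp : IsCompact Γ := by
    rw [← hrange]
    exact isCompact_range (continuous_subtype_val.comp eΓ.symm.continuous)
  have hΓconn : IsPreconnected Γ := by
    rw [← hrange]
    exact (isConnected_range (continuous_subtype_val.comp eΓ.symm.continuous)).isPreconnected
  have hUopen : IsOpen U := by
    rw [hUdef]
    exact hΓcomp.isClosed.isOpen_compl.connectedComponentIn
  set K' := K ∩ closure U with hK'def
  have hK'c : IsCompact K' := hKc.inter_right isClosed_closure
  have hUK : U \ K = U \ K' := by
    ext p
    constructor
    · rintro ⟨hpU, hpK⟩
      exact ⟨hpU, fun h => hpK h.1⟩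
    · rintro ⟨hpU, hpK⟩
      exact ⟨hpU, fun h => hpK ⟨h, subset_closure hpU⟩⟩
  have hxK' : x ∉ K' := fun h => hx.2 h.1
  have hyK' : y ∉ K' := fun h => hy.2 h.1
  have hsep1 : y ∉ connectedComponentIn (U \ K') x := by
    intro hmem
    apply hsep
    rw [hUK]
    exact connectedComponentIn_eq hmem
  have hxUc : x ∈ connectedComponentIn Γᶜ z₀ := hUdef ▸ hx.1
  have hyUc : y ∈ connectedComponentIn Γᶜ z₀ := hUdef ▸ hy.1
  have hsep2 : y ∉ connectedComponentIn (Γ ∪ K')ᶜ x := by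
    rw [← ccIn_diff_eq hxUc hxK', ← hUdef]
    exact hsep1
  have hΓxy : y ∈ connectedComponentIn Γᶜ x := by
    rwa [connectedComponentIn_eq hxUc] at hyUc
  -- move to ℂ
  set e : EuclideanSpace ℝ (Fin 2) ≃ₜ ℂ :=
    Complex.orthonormalBasisOneI.repr.toHomeomorph.symm with he
  have hmainΓ : e y ∈ connectedComponentIn (e '' Γ)ᶜ (e x) := by
    rw [← Set.image_compl_eq e.bijective, ← homeo_image_ccIn]
    exact mem_image_of_mem e hΓxy
  have hmainsep : e y ∉ connectedComponentIn ((e '' Γ) ∪ (e '' K'))ᶜ (e x) := by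
    intro hmem
    apply hsep2
    rw [← image_union, ← Set.image_compl_eq e.bijective, ← homeo_image_ccIn] at hmem
    obtain ⟨p, hp, hpe⟩ := hmem
    rwa [← e.injective hpe]
  have hexK : e x ∉ e '' K' := fun h => hxK' (e.injective.mem_set_image.mp h)
  have heyK : e y ∉ e '' K' := fun h => hyK' (e.injective.mem_set_image.mp h)
  obtain ⟨zc, hzcK, hzcsep⟩ := mainC (hΓcomp.image e.continuous)
    (hΓconn.image _ e.continuous.continuousOn)
    (hK'c.image e.continuous) hexK heyK hmainΓ hmainsep
  obtain ⟨w, hwK', hwe⟩ := hzcK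
  refine ⟨connectedComponentIn K' w, ⟨w, hwK', rfl⟩, ?_⟩
  intro heq
  apply hzcsep
  set C := connectedComponentIn K' w with hC
  have hyUC : y ∈ U \ C :=
    ⟨hy.1, fun h => hyK' (connectedComponentIn_subset _ _ h)⟩
  have hyin : y ∈ connectedComponentIn (U \ C) x := by
    rw [heq]
    exact mem_connectedComponentIn hyUC
  have hxC : x ∉ C := fun h => hxK' (connectedComponentIn_subset _ _ h)
  have htrans := ccIn_diff_eq hxUc hxC
  rw [← hUdef] at htrans
  rw [htrans] at hyin
  have himC : e '' C = connectedComponentIn (e '' K') zc := by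
    rw [hC, homeo_image_ccIn, hwe]
  rw [← himC, ← image_union, ← Set.image_compl_eq e.bijective, ← homeo_image_ccIn]
  exact mem_image_of_mem e hyin
end
end

section
/- Let K ⊆ ℝᵈ be a compact connected set that is not locally connected (in the sense: there exists ε > 0 such that for every δ > 0 there are x, y ∈ K with dist(x,y) < δ that are not both contained in any connected compact subset of K of diameter < ε). Then there exist pairwise disjoint continua C_i ⊆ K (i ∈ ℕ) converging in Hausdorff distance to a nondegenerate continuum C ⊆ K, and an η > 0 such that any continuum in K meeting two distinct sets among {C_i} ∪ {C} has diameter at least η. -/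
open Filter Topology Metric
open Set

/-- Local connectivity of a compact set in the sense of Whyburn: any two
sufficiently close points lie in a common small continuum inside the set. -/
def WhyburnLC {X : Type*} [MetricSpace X] (K : Set X) : Prop :=
  ∀ ε > (0 : ℝ), ∃ δ > (0 : ℝ), ∀ x ∈ K, ∀ y ∈ K, dist x y < δ →
    ∃ T : Set X, T ⊆ K ∧ IsCompact T ∧ IsConnected T ∧ x ∈ T ∧ y ∈ T ∧
      Metric.diam T < ε

variable {E : Type*} [MetricSpace E]

/-- In a compact Hausdorff space, if the connected component of `z` is disjoint from a
closed set `S`, there is a clopen set containing `z` disjoint from `S`. -/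
lemma clopen_sep {X : Type*} [TopologicalSpace X] [CompactSpace X] [T2Space X]
    {z : X} {S : Set X} (hS : IsClosed S) (hdis : Disjoint (connectedComponent z) S) :
    ∃ U : Set X, IsClopen U ∧ z ∈ U ∧ Disjoint U S := by
  have h := connectedComponent_eq_iInter_isClopen z
  have hempty : (S ∩ ⋂ (Z : {Z : Set X // IsClopen Z ∧ z ∈ Z}), (Z : Set X)) = ∅ := by
    rw [← h]
    exact disjoint_iff_inter_eq_empty.mp hdis.symm
  obtain ⟨t, ht⟩ := hS.isCompact.elim_finite_subfamily_closed _
    (fun Z : {Z : Set X // IsClopen Z ∧ z ∈ Z} => Z.2.1.isClosed) hempty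
  refine ⟨⋂ Z ∈ t, (Z : Set X), isClopen_biInter_finset (fun Z _ => Z.2.1), ?_, ?_⟩
  · exact mem_iInter₂.mpr fun Z _ => Z.2.2
  · rw [disjoint_iff_inter_eq_empty, inter_comm]
    exact ht

/-- Boundary bumping: the connected component of `z` in `X ∩ closedBall p s` reaches the
sphere of radius `s`, provided `X` is a compact preconnected set that exits the ball. -/
lemma bump_s14 {X : Set E} (hXc : IsCompact X) (hXpc : IsPreconnected X)
    {p z q : E} (hz : z ∈ X) (hq : q ∈ X) {s : ℝ}
    (hzs : dist z p ≤ s) (hqs : s < dist q p) :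
    ∃ w ∈ connectedComponentIn (X ∩ closedBall p s) z, dist w p = s := by
  by_contra hcon
  push_neg at hcon
  set A : Set E := X ∩ closedBall p s with hA
  have hzA : z ∈ A := ⟨hz, by simpa [mem_closedBall] using hzs⟩
  have hAc : IsCompact A := hXc.inter_right isClosed_closedBall
  haveI : CompactSpace A := isCompact_iff_compactSpace.mp hAc
  set z' : A := ⟨z, hzA⟩ with hz'
  set S : Set A := {w : A | dist (w : E) p = s} with hSdef
  have hSclosed : IsClosed S :=
    isClosed_eq (continuous_subtype_val.dist continuous_const) continuous_const
  have hdis : Disjoint (connectedComponent z') S := by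
    rw [Set.disjoint_left]
    rintro w hw hwS
    exact hcon (w : E) (by rw [connectedComponentIn_eq_image hzA]; exact ⟨w, hw, rfl⟩) hwS
  obtain ⟨U, hUclopen, hzU, hUS⟩ := clopen_sep hSclosed hdis
  set V : Set E := Subtype.val '' U with hV
  have hVcompact : IsCompact V :=
    (hUclopen.isClosed.isCompact).image continuous_subtype_val
  have hVclosed : IsClosed V := hVcompact.isClosed
  obtain ⟨O, hO, hOU⟩ := isOpen_induced_iff.mp hUclopen.isOpen
  have hVO : V = O ∩ A := by
    rw [hV, ← hOU]
    rw [Subtype.image_preimage_coe, Set.inter_comm]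
  have hVball : V ⊆ X ∩ ball p s := by
    rintro v ⟨u, hu, rfl⟩
    refine ⟨u.2.1, ?_⟩
    have h1 : dist (u : E) p ≤ s := u.2.2
    have h2 : dist (u : E) p ≠ s := fun h => (Set.disjoint_left.mp hUS hu) h
    exact mem_ball.mpr (lt_of_le_of_ne h1 h2)
  have hXO' : X ∩ (O ∩ ball p s) = V := by
    apply Set.Subset.antisymm
    · rintro x ⟨hxX, hxO, hxball⟩
      rw [hVO]
      exact ⟨hxO, hxX, ball_subset_closedBall hxball⟩
    · intro v hv
      exact ⟨(hVball hv).1, (hVO ▸ hv).1, (hVball hv).2⟩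
  have hqV : q ∉ V := fun h => absurd (mem_ball.mp (hVball h).2) (not_lt.mpr hqs.le)
  have hsub : X ⊆ (O ∩ ball p s) ∪ Vᶜ := by
    intro x hx
    by_cases hxV : x ∈ V
    · left
      rw [hVO] at hxV
      exact ⟨hxV.1, (hVball (hVO ▸ hxV)).2⟩
    · right; exact hxV
  have hne1 : (X ∩ (O ∩ ball p s)).Nonempty := ⟨z, by rw [hXO']; exact ⟨z', hzU, rfl⟩⟩
  have hne2 : (X ∩ Vᶜ).Nonempty := ⟨q, hq, hqV⟩
  obtain ⟨x, hxX, hxu, hxv⟩ := hXpc (O ∩ ball p s) Vᶜ (hO.inter isOpen_ball)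
    hVclosed.isOpen_compl hsub hne1 hne2
  exact hxv (by rw [← hXO']; exact ⟨hxX, hxu⟩)

lemma isCompact_connectedComponentIn {A : Set E} (hA : IsCompact A) {x : E} :
    IsCompact (connectedComponentIn A x) := by
  by_cases hx : x ∈ A
  · rw [connectedComponentIn_eq_image hx]
    haveI : CompactSpace A := isCompact_iff_compactSpace.mp hA
    exact isClosed_connectedComponent.isCompact.image continuous_subtype_val
  · rw [connectedComponentIn_eq_empty hx]; exact isCompact_empty

lemma connectedComponentIn_disjoint {A : Set E} {a b : E}
    (h : connectedComponentIn A a ≠ connectedComponentIn A b) :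
    Disjoint (connectedComponentIn A a) (connectedComponentIn A b) := by
  rw [Set.disjoint_left]
  intro w hwa hwb
  exact h ((connectedComponentIn_eq hwa).trans (connectedComponentIn_eq hwb).symm)

/-- The Hausdorff limit of a sequence of nonempty bounded preconnected sets is preconnected,
provided the limit is compact and nonempty. -/
lemma isPreconnected_of_hausdorff_lim {s : ℕ → Set E} {L : Set E}
    (hsne : ∀ n, (s n).Nonempty) (hsb : ∀ n, Bornology.IsBounded (s n))
    (hspc : ∀ n, IsPreconnected (s n)) (hLne : L.Nonempty) (hLc : IsCompact L)
    (hconv : Tendsto (fun n => hausdorffDist (s n) L) atTop (𝓝 0)) :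
    IsPreconnected L := by
  intro u v hu hv hLuv hLu hLv
  by_contra hne
  rw [Set.not_nonempty_iff_eq_empty] at hne
  set A : Set E := L \ v with hAdef
  set B : Set E := L \ u with hBdef
  have hAc : IsCompact A := hLc.inter_right hv.isClosed_compl
  have hBc : IsCompact B := hLc.inter_right hu.isClosed_compl
  have hABdisj : Disjoint A B := by
    rw [Set.disjoint_left]
    rintro x ⟨hxL, hxv⟩ ⟨_, hxu⟩
    rcases hLuv hxL with h | h
    exacts [hxu h, hxv h]
  have hAne : A.Nonempty := by
    obtain ⟨x, hxL, hxu⟩ := hLu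
    exact ⟨x, hxL, fun hxv => by
      have : x ∈ L ∩ (u ∩ v) := ⟨hxL, hxu, hxv⟩
      rw [hne] at this; exact this⟩
  have hBne : B.Nonempty := by
    obtain ⟨x, hxL, hxv⟩ := hLv
    exact ⟨x, hxL, fun hxu => by
      have : x ∈ L ∩ (u ∩ v) := ⟨hxL, hxu, hxv⟩
      rw [hne] at this; exact this⟩
  obtain ⟨δ, hδpos, hth⟩ := hABdisj.exists_thickenings hAc hBc.isClosed
  obtain ⟨n, hn⟩ := (hconv.eventually (gt_mem_nhds hδpos)).exists
  have fin : EMetric.hausdorffEdist (s n) L ≠ ⊤ :=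
    hausdorffEdist_ne_top_of_nonempty_of_bounded (hsne n) hLne (hsb n) hLc.isBounded
  have hsplit : s n ⊆ thickening δ A ∪ thickening δ B := by
    intro x hx
    obtain ⟨y, hyL, hxy⟩ := exists_dist_lt_of_hausdorffDist_lt hx hn fin
    rcases hLuv hyL with h | h
    · left
      refine mem_thickening_iff.mpr ⟨y, ⟨hyL, fun hyv => ?_⟩, hxy⟩
      have : y ∈ L ∩ (u ∩ v) := ⟨hyL, h, hyv⟩
      rw [hne] at this; exact this
    · right
      refine mem_thickening_iff.mpr ⟨y, ⟨hyL, fun hyu => ?_⟩, hxy⟩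
      have : y ∈ L ∩ (u ∩ v) := ⟨hyL, hyu, h⟩
      rw [hne] at this; exact this
  have hmeetA : (s n ∩ thickening δ A).Nonempty := by
    obtain ⟨a, haA⟩ := hAne
    obtain ⟨x, hxs, hxa⟩ := exists_dist_lt_of_hausdorffDist_lt' haA.1 hn fin
    exact ⟨x, hxs, mem_thickening_iff.mpr ⟨a, haA, hxa⟩⟩
  have hmeetB : (s n ∩ thickening δ B).Nonempty := by
    obtain ⟨b, hbB⟩ := hBne
    obtain ⟨x, hxs, hxb⟩ := exists_dist_lt_of_hausdorffDist_lt' hbB.1 hn fin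
    exact ⟨x, hxs, mem_thickening_iff.mpr ⟨b, hbB, hxb⟩⟩
  obtain ⟨x, -, hxA, hxB⟩ := hspc n (thickening δ A) (thickening δ B)
    isOpen_thickening isOpen_thickening hsplit hmeetA hmeetB
  exact Set.disjoint_left.mp hth hxA hxB

theorem stmt14 {d : ℕ} (K : Set (EuclideanSpace ℝ (Fin d)))
    (hKc : IsCompact K) (hKconn : IsConnected K) (hnlc : ¬ WhyburnLC K) :
    ∃ (C : ℕ → Set (EuclideanSpace ℝ (Fin d)))
      (Clim : Set (EuclideanSpace ℝ (Fin d))) (η : ℝ),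
      0 < η ∧
      (∀ i, C i ⊆ K ∧ IsCompact (C i) ∧ IsConnected (C i)) ∧
      (∀ i j, i ≠ j → Disjoint (C i) (C j)) ∧
      Clim ⊆ K ∧ IsCompact Clim ∧ IsConnected Clim ∧
      (∃ a ∈ Clim, ∃ b ∈ Clim, a ≠ b) ∧
      Tendsto (fun n => hausdorffDist (C n) Clim) atTop (𝓝 0) ∧
      (∀ T : Set (EuclideanSpace ℝ (Fin d)), T ⊆ K → IsCompact T → IsConnected T →
        ((∃ i j, i ≠ j ∧ (T ∩ C i).Nonempty ∧ (T ∩ C j).Nonempty) ∨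
          (∃ i, (T ∩ C i).Nonempty ∧ (T ∩ Clim).Nonempty)) →
        η ≤ Metric.diam T) := by
  classical
  rw [WhyburnLC] at hnlc
  push_neg at hnlc
  obtain ⟨ε, hε, hbad⟩ := hnlc
  -- choose bad pairs for δ = 1/(n+1)
  choose xx hxK yy hyK hxy hTbig using fun n : ℕ =>
    hbad (1/((n : ℝ)+1)) (by positivity)
  -- cluster point p
  obtain ⟨p, hpK, φ, hφmono, hφconv⟩ := hKc.tendsto_subseq hxK
  have hone : Tendsto (fun n : ℕ => 1/((n : ℝ)+1)) atTop (𝓝 0) :=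
    tendsto_one_div_add_atTop_nhds_zero_nat
  have hdistxy : Tendsto (fun n => dist (xx (φ n)) (yy (φ n))) atTop (𝓝 0) := by
    refine squeeze_zero (fun n => dist_nonneg) (fun n => ?_) hone
    refine (hxy (φ n)).le.trans ?_
    have h1 : (n : ℝ) + 1 ≤ (φ n : ℝ) + 1 := by
      have := hφmono.le_apply (x := n)
      exact_mod_cast by omega
    exact one_div_le_one_div_of_le (by positivity) h1
  have hxconv : Tendsto (fun n => dist (xx (φ n)) p) atTop (𝓝 0) := by
    have := tendsto_iff_dist_tendsto_zero.mp hφconv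
    exact this
  -- r
  set r : ℝ := ε/3 with hrdef
  have hr : 0 < r := by positivity
  -- a point far from p
  obtain ⟨q, hqK, hqp⟩ : ∃ q ∈ K, r < dist q p := by
    by_contra hcon
    push_neg at hcon
    obtain ⟨a, haK, b, hbK, hab, hT⟩ := hbad 1 one_pos
    have hdiamK : Metric.diam K ≤ 2*r := by
      refine diam_le_of_forall_dist_le (by positivity) (fun u hu w hw => ?_)
      calc dist u w ≤ dist u p + dist w p := dist_triangle_right _ _ _
        _ ≤ r + r := add_le_add (hcon u hu) (hcon w hw)
        _ = 2*r := by ring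
    have := hT K subset_rfl hKc hKconn haK hbK
    linarith
  -- the big ball set
  set A : Set (EuclideanSpace ℝ (Fin d)) := K ∩ closedBall p r with hAdef
  have hAc : IsCompact A := hKc.inter_right isClosed_closedBall
  have hzA : ∀ {w : EuclideanSpace ℝ (Fin d)}, w ∈ K → dist w p ≤ r/4 → w ∈ A :=
    fun hw h => ⟨hw, mem_closedBall.mpr (by linarith)⟩
  have hGdiam : ∀ {w : EuclideanSpace ℝ (Fin d)}, Metric.diam (connectedComponentIn A w) < ε := by
    intro w
    have h1 : connectedComponentIn A w ⊆ closedBall p r :=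
      (connectedComponentIn_subset _ _).trans inter_subset_right
    calc Metric.diam (connectedComponentIn A w)
        ≤ Metric.diam (closedBall p r) := diam_mono h1 isBounded_closedBall
      _ ≤ 2*r := diam_closedBall hr.le
      _ < ε := by rw [hrdef]; linarith
  have hGA : ∀ {w : EuclideanSpace ℝ (Fin d)}, connectedComponentIn A w ⊆ A := fun {w} => connectedComponentIn_subset _ _
  have hGK : ∀ {w : EuclideanSpace ℝ (Fin d)}, connectedComponentIn A w ⊆ K := fun {w} => hGA.trans inter_subset_left
  -- key: arbitrarily close bad pairs near p
  have key : ∀ δ : ℝ, 0 < δ → ∃ a b : EuclideanSpace ℝ (Fin d), a ∈ K ∧ b ∈ K ∧ dist a p ≤ r/4 ∧ dist b p ≤ r/4 ∧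
      dist a b < δ ∧ ∀ T : Set (EuclideanSpace ℝ (Fin d)), T ⊆ K → IsCompact T → IsConnected T → a ∈ T → b ∈ T →
        ε ≤ Metric.diam T := by
    intro δ hδ
    have h1 : ∀ᶠ n in atTop, dist (xx (φ n)) p < r/8 :=
      hxconv.eventually (gt_mem_nhds (by positivity))
    have h2 : ∀ᶠ n in atTop, dist (xx (φ n)) (yy (φ n)) < min δ (r/8) :=
      hdistxy.eventually (gt_mem_nhds (lt_min hδ (by positivity)))
    obtain ⟨n, hn1, hn2⟩ := (h1.and h2).exists
    refine ⟨xx (φ n), yy (φ n), hxK _, hyK _, by linarith, ?_, ?_, hTbig (φ n)⟩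
    · calc dist (yy (φ n)) p ≤ dist (yy (φ n)) (xx (φ n)) + dist (xx (φ n)) p := dist_triangle _ _ _
        _ ≤ min δ (r/8) + r/8 := by
            rw [dist_comm]
            exact add_le_add hn2.le hn1.le
        _ ≤ r/8 + r/8 := by simp [min_le_right]
        _ = r/4 := by ring
    · exact hn2.trans_le (min_le_left _ _)
  -- the family of components
  set 𝒮 : Set (Set (EuclideanSpace ℝ (Fin d))) := {G | ∃ z, z ∈ K ∧ dist z p ≤ r/4 ∧ G = connectedComponentIn A z}
    with h𝒮
  have hSinf : 𝒮.Infinite := by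
    by_contra hinf
    rw [Set.not_infinite] at hinf
    have hfin := hinf
    haveI := hfin.to_subtype
    choose a b haK hbK hap hbp hab hT2 using fun n : ℕ => key (1/((n : ℝ)+1)) (by positivity)
    have haA : ∀ n, a n ∈ A := fun n => hzA (haK n) (hap n)
    have hbA : ∀ n, b n ∈ A := fun n => hzA (hbK n) (hbp n)
    have hEF : ∀ n, connectedComponentIn A (a n) ≠ connectedComponentIn A (b n) := by
      intro n heq
      have hbmem : b n ∈ connectedComponentIn A (a n) := heq ▸ mem_connectedComponentIn (hbA n)
      have := hT2 n (connectedComponentIn A (a n)) hGK (isCompact_connectedComponentIn hAc)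
        (isConnected_connectedComponentIn_iff.mpr (haA n))
        (mem_connectedComponentIn (haA n)) hbmem
      exact absurd this (not_le.mpr hGdiam)
    set f : ℕ → ↥𝒮 × ↥𝒮 := fun n =>
      (⟨connectedComponentIn A (a n), ⟨a n, haK n, hap n, rfl⟩⟩,
       ⟨connectedComponentIn A (b n), ⟨b n, hbK n, hbp n, rfl⟩⟩) with hf
    obtain ⟨⟨G, G'⟩, hfib⟩ := Finite.exists_infinite_fiber f
    have hfibinf : (f ⁻¹' {(G, G')}).Infinite := Set.infinite_coe_iff.mp hfib
    obtain ⟨n₀, hn₀⟩ := hfibinf.nonempty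
    have hG0 : connectedComponentIn A (a n₀) = (G : Set (EuclideanSpace ℝ (Fin d))) := by
      have := congrArg (fun w : ↥𝒮 × ↥𝒮 => (w.1 : Set (EuclideanSpace ℝ (Fin d)))) hn₀
      simpa [hf] using this
    have hG0' : connectedComponentIn A (b n₀) = (G' : Set (EuclideanSpace ℝ (Fin d))) := by
      have := congrArg (fun w : ↥𝒮 × ↥𝒮 => (w.2 : Set (EuclideanSpace ℝ (Fin d)))) hn₀
      simpa [hf] using this
    have hdisjGG : Disjoint (G : Set (EuclideanSpace ℝ (Fin d))) (G' : Set (EuclideanSpace ℝ (Fin d))) := by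
      rw [← hG0, ← hG0']
      exact connectedComponentIn_disjoint (hEF n₀)
    have hGc : IsCompact (G : Set (EuclideanSpace ℝ (Fin d))) := hG0 ▸ isCompact_connectedComponentIn hAc
    have hG'c : IsCompact (G' : Set (EuclideanSpace ℝ (Fin d))) := hG0' ▸ isCompact_connectedComponentIn hAc
    obtain ⟨δ, hδpos, hth⟩ := hdisjGG.exists_thickenings hGc hG'c.isClosed
    obtain ⟨N, hN⟩ := exists_nat_one_div_lt hδpos
    obtain ⟨n, hnfib, hnN⟩ : ∃ n ∈ f ⁻¹' {(G, G')}, N < n := by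
      by_contra hb
      push_neg at hb
      exact hfibinf ((Set.finite_Iic N).subset (fun n hn => hb n hn))
    have hGn : connectedComponentIn A (a n) = (G : Set (EuclideanSpace ℝ (Fin d))) := by
      have := congrArg (fun w : ↥𝒮 × ↥𝒮 => (w.1 : Set (EuclideanSpace ℝ (Fin d)))) hnfib
      simpa [hf] using this
    have hG'n : connectedComponentIn A (b n) = (G' : Set (EuclideanSpace ℝ (Fin d))) := by
      have := congrArg (fun w : ↥𝒮 × ↥𝒮 => (w.2 : Set (EuclideanSpace ℝ (Fin d)))) hnfib
      simpa [hf] using this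
    have habδ : dist (a n) (b n) < δ := by
      refine (hab n).trans (lt_of_le_of_lt ?_ hN)
      refine one_div_le_one_div_of_le (by positivity) ?_
      exact_mod_cast by omega
    have hmem1 : b n ∈ thickening δ (G : Set (EuclideanSpace ℝ (Fin d))) :=
      mem_thickening_iff.mpr ⟨a n, hGn ▸ mem_connectedComponentIn (haA n),
        by rwa [dist_comm]⟩
    have hmem2 : b n ∈ thickening δ (G' : Set (EuclideanSpace ℝ (Fin d))) :=
      self_subset_thickening hδpos _ (hG'n ▸ mem_connectedComponentIn (hbA n))
    exact Set.disjoint_left.mp hth hmem1 hmem2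
  -- extract countably many distinct components
  set e : ℕ ↪ ↥𝒮 := hSinf.natEmbedding with he
  set G : ℕ → Set (EuclideanSpace ℝ (Fin d)) := fun k => (e k : Set (EuclideanSpace ℝ (Fin d))) with hG
  have hGinj : Function.Injective G := fun i j h => e.injective (Subtype.coe_injective h)
  choose z hzK hzp hGz using fun k => (e k).2
  have hzAmem : ∀ k, z k ∈ A := fun k => hzA (hzK k) (hzp k)
  have hGzeq : ∀ k, G k = connectedComponentIn A (z k) := fun k => hGz k
  have hGkc : ∀ k, IsCompact (G k) := fun k => (hGzeq k) ▸ isCompact_connectedComponentIn hAc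
  have hGkpc : ∀ k, IsPreconnected (G k) := fun k =>
    (hGzeq k) ▸ isPreconnected_connectedComponentIn
  have hzG : ∀ k, z k ∈ G k := fun k => (hGzeq k) ▸ mem_connectedComponentIn (hzAmem k)
  have hGkA : ∀ k, G k ⊆ A := fun k => (hGzeq k) ▸ connectedComponentIn_subset _ _
  -- the small continua
  set Csub : ℕ → Set (EuclideanSpace ℝ (Fin d)) := fun k => connectedComponentIn (G k ∩ closedBall p (r/2)) (z k)
    with hCsubdef
  have hzGball : ∀ k, z k ∈ G k ∩ closedBall p (r/2) := fun k =>
    ⟨hzG k, mem_closedBall.mpr (by linarith [hzp k])⟩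
  have hzCsub : ∀ k, z k ∈ Csub k := fun k => mem_connectedComponentIn (hzGball k)
  have hCsubc : ∀ k, IsCompact (Csub k) := fun k =>
    isCompact_connectedComponentIn ((hGkc k).inter_right isClosed_closedBall)
  have hCsubconn : ∀ k, IsConnected (Csub k) := fun k =>
    isConnected_connectedComponentIn_iff.mpr (hzGball k)
  have hCsubG : ∀ k, Csub k ⊆ G k := fun k =>
    (connectedComponentIn_subset _ _).trans inter_subset_left
  have hCsubK : ∀ k, Csub k ⊆ K := fun k => (hCsubG k).trans ((hGkA k).trans inter_subset_left)
  have hCsubball : ∀ k, Csub k ⊆ closedBall p (r/2) := fun k =>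
    (connectedComponentIn_subset _ _).trans inter_subset_right
  have hCdiam : ∀ k, r/4 ≤ Metric.diam (Csub k) := by
    intro k
    obtain ⟨w, hwG, hwr⟩ : ∃ w ∈ connectedComponentIn (K ∩ closedBall p r) (z k),
        dist w p = r := bump_s14 hKc hKconn.2 (hzK k) hqK (by linarith [hzp k]) hqp
    have hwG' : w ∈ G k := by rw [hGzeq k, hAdef]; exact hwG
    obtain ⟨w', hw'C, hw'r⟩ : ∃ w' ∈ connectedComponentIn (G k ∩ closedBall p (r/2)) (z k),
        dist w' p = r/2 :=
      bump_s14 (hGkc k) (hGkpc k) (hzG k) hwG' (by linarith [hzp k]) (by rw [hwr]; linarith)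
    have h1 : dist w' (z k) ≤ Metric.diam (Csub k) :=
      dist_le_diam_of_mem (hCsubc k).isBounded hw'C (hzCsub k)
    have h2 : r/2 ≤ dist w' (z k) + dist (z k) p := by
      rw [← hw'r]; exact dist_triangle _ _ _
    linarith [hzp k]
  -- Hausdorff convergence setup
  set Q : Set (EuclideanSpace ℝ (Fin d)) := K ∩ closedBall p (r/2) with hQdef
  have hQc : IsCompact Q := hKc.inter_right isClosed_closedBall
  haveI : CompactSpace ↥Q := isCompact_iff_compactSpace.mp hQc
  have hCsubQ : ∀ k, Csub k ⊆ Q := fun k => Set.subset_inter (hCsubK k) (hCsubball k)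
  set Chat : ℕ → TopologicalSpace.NonemptyCompacts ↥Q := fun k =>
    ⟨⟨Subtype.val ⁻¹' Csub k,
      ((hCsubc k).isClosed.preimage continuous_subtype_val).isCompact⟩,
      ⟨⟨z k, hCsubQ k (hzCsub k)⟩, hzCsub k⟩⟩ with hChat
  obtain ⟨L, ψ, hψmono, hψconv⟩ := CompactSpace.tendsto_subseq Chat
  set Clim : Set (EuclideanSpace ℝ (Fin d)) := Subtype.val '' (L : Set ↥Q) with hClimdef
  have hchatcoe : ∀ k, Subtype.val '' ((Chat k : Set ↥Q)) = Csub k := by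
    intro k
    rw [hChat]
    show Subtype.val '' (Subtype.val ⁻¹' Csub k) = Csub k
    rw [Subtype.image_preimage_coe]
    exact Set.inter_eq_self_of_subset_right (hCsubQ k)
  have hdeq : ∀ k, hausdorffDist (Csub (ψ k)) Clim = dist (Chat (ψ k)) L := by
    intro k
    rw [Metric.NonemptyCompacts.dist_eq, ← hchatcoe (ψ k), hClimdef,
      hausdorffDist_image isometry_subtype_coe]
  have hconvH : Tendsto (fun k => hausdorffDist (Csub (ψ k)) Clim) atTop (𝓝 0) := by
    simp_rw [hdeq]
    exact tendsto_iff_dist_tendsto_zero.mp hψconv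
  -- Clim properties
  have hClimQ : Clim ⊆ Q := Subtype.coe_image_subset _ _
  have hClimK : Clim ⊆ K := hClimQ.trans inter_subset_left
  have hClimc : IsCompact Clim := L.isCompact.image continuous_subtype_val
  have hClimne : Clim.Nonempty := L.nonempty.image _
  have hClimpc : IsPreconnected Clim := by
    refine isPreconnected_of_hausdorff_lim (s := fun k => Csub (ψ k))
      (fun k => ⟨z (ψ k), hzCsub (ψ k)⟩) (fun k => (hCsubc (ψ k)).isBounded)
      (fun k => (hCsubconn (ψ k)).isPreconnected) hClimne hClimc hconvH
  -- Clim is nondegenerate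
  obtain ⟨aa', haa', bb', hbb', hab'⟩ : ∃ a ∈ Clim, ∃ b ∈ Clim, a ≠ b := by
    obtain ⟨k₁, hk₁⟩ := (hconvH.eventually (gt_mem_nhds (show (0:ℝ) < r/16 by positivity))).exists
    have fin : EMetric.hausdorffEdist (Csub (ψ k₁)) Clim ≠ ⊤ :=
      hausdorffEdist_ne_top_of_nonempty_of_bounded ⟨_, hzCsub _⟩ hClimne
        (hCsubc _).isBounded hClimc.isBounded
    obtain ⟨aa, haa, bb, hbb, habb⟩ : ∃ aa ∈ Csub (ψ k₁), ∃ bb ∈ Csub (ψ k₁),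
        r/8 < dist aa bb := by
      by_contra hcon
      push_neg at hcon
      have : Metric.diam (Csub (ψ k₁)) ≤ r/8 :=
        diam_le_of_forall_dist_le (by positivity) (fun u hu w hw => hcon u hu w hw)
      linarith [hCdiam (ψ k₁)]
    obtain ⟨aa', haa', h1⟩ := exists_dist_lt_of_hausdorffDist_lt haa hk₁ fin
    obtain ⟨bb', hbb', h2⟩ := exists_dist_lt_of_hausdorffDist_lt hbb hk₁ fin
    refine ⟨aa', haa', bb', hbb', fun hcontra => ?_⟩
    rw [← hcontra] at h2
    have : dist aa bb ≤ dist aa aa' + dist bb aa' := dist_triangle_right _ _ _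
    linarith
  -- bridge lemma
  have bridge : ∀ T : Set (EuclideanSpace ℝ (Fin d)), T ⊆ K → Bornology.IsBounded T → IsPreconnected T →
      Metric.diam T < r/2 → ∀ k, (T ∩ Csub k).Nonempty → ∀ z', z' ∈ A →
      (T ∩ connectedComponentIn A z').Nonempty → G k = connectedComponentIn A z' := by
    rintro T hTK hTb hTpc hTd k ⟨t₀, ht₀T, ht₀C⟩ z' hz'A ⟨t₁, ht₁T, ht₁C⟩
    have hTA : T ⊆ A := by
      intro t ht
      refine ⟨hTK ht, mem_closedBall.mpr ?_⟩
      have h1 : dist t t₀ ≤ Metric.diam T := dist_le_diam_of_mem hTb ht ht₀T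
      have h2 : dist t₀ p ≤ r/2 := mem_closedBall.mp (hCsubball k ht₀C)
      calc dist t p ≤ dist t t₀ + dist t₀ p := dist_triangle _ _ _
        _ ≤ r := by linarith
    have hW1 : IsPreconnected (G k ∪ T) :=
      IsPreconnected.union t₀ (hCsubG k ht₀C) ht₀T (hGkpc k) hTpc
    have hWpc : IsPreconnected ((G k ∪ T) ∪ connectedComponentIn A z') :=
      IsPreconnected.union t₁ (Or.inr ht₁T) ht₁C hW1 isPreconnected_connectedComponentIn
    have hWA : (G k ∪ T) ∪ connectedComponentIn A z' ⊆ A :=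
      Set.union_subset (Set.union_subset (hGkA k) hTA) (connectedComponentIn_subset _ _)
    have hWsub : (G k ∪ T) ∪ connectedComponentIn A z' ⊆ connectedComponentIn A (z k) :=
      hWpc.subset_connectedComponentIn (Or.inl (Or.inl (hzG k))) hWA
    have hz'G : z' ∈ connectedComponentIn A (z k) :=
      hWsub (Or.inr (mem_connectedComponentIn hz'A))
    rw [hGzeq k]
    exact connectedComponentIn_eq hz'G
  -- the component of the limit
  obtain ⟨w₀, hw₀⟩ := id hClimne
  have hClimA : Clim ⊆ A := fun x hx =>
    ⟨(hClimQ hx).1, mem_closedBall.mpr (by linarith [mem_closedBall.mp (hClimQ hx).2])⟩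
  set Gstar : Set (EuclideanSpace ℝ (Fin d)) := connectedComponentIn A w₀ with hGstar
  have hClimG : Clim ⊆ Gstar := hClimpc.subset_connectedComponentIn hw₀ hClimA
  have hGψinj : Function.Injective (fun k => G (ψ k)) := hGinj.comp hψmono.injective
  -- avoid the component of the limit
  obtain ⟨ρ, hρmono, hρne⟩ : ∃ ρ : ℕ → ℕ, StrictMono ρ ∧ ∀ k, G (ψ (ρ k)) ≠ Gstar := by
    by_cases hex : ∃ m, G (ψ m) = Gstar
    · obtain ⟨k₀, hk₀⟩ := hex
      refine ⟨fun k => if k < k₀ then k else k+1, ?_, ?_⟩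
      · intro a b hab
        dsimp only
        split_ifs <;> omega
      · intro k hGk
        have h2 : (if k < k₀ then k else k+1) = k₀ := hGψinj (hGk.trans hk₀.symm)
        split_ifs at h2 <;> omega
    · push_neg at hex
      exact ⟨id, strictMono_id, fun k => hex k⟩
  have hθinj : Function.Injective (fun i => ψ (ρ i)) :=
    hψmono.injective.comp hρmono.injective
  -- assemble
  refine ⟨fun i => Csub (ψ (ρ i)), Clim, r/2, by positivity,
    fun i => ⟨hCsubK _, hCsubc _, hCsubconn _⟩, ?_, hClimK, hClimc, ⟨hClimne, hClimpc⟩,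
    ⟨aa', haa', bb', hbb', hab'⟩, ?_, ?_⟩
  · -- disjointness
    intro i j hij
    have hne : G (ψ (ρ i)) ≠ G (ψ (ρ j)) := fun h => hij (hθinj (hGinj h))
    have : Disjoint (G (ψ (ρ i))) (G (ψ (ρ j))) := by
      rw [hGzeq (ψ (ρ i)), hGzeq (ψ (ρ j))]
      exact connectedComponentIn_disjoint (by rw [← hGzeq, ← hGzeq]; exact hne)
    exact this.mono (hCsubG _) (hCsubG _)
  · -- convergence
    exact hconvH.comp hρmono.tendsto_atTop
  · -- the separation property
    intro T hTK hTc hTconn hcase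
    by_contra hlt
    push_neg at hlt
    rcases hcase with ⟨i, j, hij, h1, h2⟩ | ⟨i, h1, h2⟩
    · have h2' : (T ∩ connectedComponentIn A (z (ψ (ρ j)))).Nonempty := by
        obtain ⟨t, ht1, ht2⟩ := h2
        exact ⟨t, ht1, by rw [← hGzeq]; exact hCsubG _ ht2⟩
      have e1 : G (ψ (ρ i)) = connectedComponentIn A (z (ψ (ρ j))) :=
        bridge T hTK hTc.isBounded hTconn.2 hlt (ψ (ρ i)) h1 (z (ψ (ρ j)))
          (hzAmem _) h2'
      rw [← hGzeq] at e1
      exact hij (hθinj (hGinj e1))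
    · have h2' : (T ∩ connectedComponentIn A w₀).Nonempty := by
        obtain ⟨t, ht1, ht2⟩ := h2
        exact ⟨t, ht1, hClimG ht2⟩
      have e1 : G (ψ (ρ i)) = Gstar :=
        bridge T hTK hTc.isBounded hTconn.2 hlt (ψ (ρ i)) h1 w₀ (hClimA hw₀) h2'
      exact hρne i e1
end
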